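/- arXiv:1902.00979 — 9 statements merged into one kernel-verified Lean document; each statement's English description precedes it below -/
import Mathlib

section
/- If a continuous function y : ℝ³ → ℝ³ satisfies ∇y = F₁ a.e. on the half-space {x · m < 0} and ∇y = F₂ a.e. on {x · m > 0} for a unit vector m and matrices F₁, F₂, then F₁ - F₂ = b ⊗ m for some vector b ∈ ℝ³. -/
open Matrix MeasureTheory

open Metric Set Filter Topology

theorem Phi_hasDerivWithinAt (f : (Fin 3 → ℝ) → ℝ) {C : NNReal} (hf : LipschitzWith C f)
    (v x₀ : Fin 3 → ℝ) (r : ℝ) (t : ℝ) :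
    HasDerivWithinAt (fun s => ∫ x in closedBall x₀ r, f (x + s • v))
      (∫ x in closedBall x₀ r, lineDeriv ℝ f (x + t • v) v) (Ici t) t := by
  set B := closedBall x₀ r with hB
  have hBc : IsCompact B := isCompact_closedBall _ _
  have hBm : MeasurableSet B := measurableSet_closedBall
  have hint : ∀ s : ℝ, IntegrableOn (fun x => f (x + s • v)) B volume := fun s =>
    ((hf.continuous.comp (continuous_id.add continuous_const)).continuousOn).integrableOn_compact hBc
  set Φ : ℝ → ℝ := fun s => ∫ x in B, f (x + s • v) with hΦ
  set ft : (Fin 3 → ℝ) → ℝ := fun x => f (x + t • v) with hft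
  have hftl : LipschitzWith C ft := by
    simpa [hft, Function.comp_def] using hf.comp ((isometry_add_right (t • v)).lipschitz)
  set g : (Fin 3 → ℝ) → ℝ := B.indicator 1 with hg
  have hgi : Integrable g volume := by
    rw [hg, integrable_indicator_iff hBm]
    exact integrableOn_const hBc.measure_lt_top.ne
  have key := hftl.integral_inv_smul_sub_mul_tendsto_integral_lineDeriv_mul
    (μ := volume) hgi v
  -- rewrite limit value
  have hval : ∫ x, lineDeriv ℝ ft x v * g x = ∫ x in B, lineDeriv ℝ f (x + t • v) v := by
    rw [← integral_indicator hBm]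
    congr 1
    ext x
    have h1 : lineDeriv ℝ ft x v = lineDeriv ℝ f (x + t • v) v := by
      simp only [lineDeriv, hft]
      congr 1
      ext s
      congr 1
      abel
    by_cases hx : x ∈ B <;> simp [hg, hx, h1]
  rw [hval] at key
  -- identify the functions
  have hfun : ∀ u : ℝ, (∫ x, (u⁻¹ • (ft (x + u • v) - ft x)) * g x) = u⁻¹ • (Φ (t + u) - Φ t) := by
    intro u
    have e1 : ∀ x, (u⁻¹ • (ft (x + u • v) - ft x)) * g x
        = u⁻¹ • (B.indicator (fun x => f (x + (t + u) • v)) x - B.indicator (fun x => f (x + t • v)) x) := by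
      intro x
      have harg : x + u • v + t • v = x + (t + u) • v := by
        rw [add_smul]; abel
      by_cases hx : x ∈ B <;> simp [hg, hx, hft, harg, mul_comm]
    simp only [e1]
    rw [integral_smul]
    congr 1
    rw [integral_sub ((integrable_indicator_iff hBm).2 (hint _)) ((integrable_indicator_iff hBm).2 (hint _)),
      integral_indicator hBm, integral_indicator hBm]
  simp only [hfun] at key
  rw [hasDerivWithinAt_iff_tendsto_slope, Ici_sdiff_left]
  have hmap : Tendsto (fun s => s - t) (𝓝[>] t) (𝓝[>] (0:ℝ)) := by
    apply tendsto_nhdsWithin_of_tendsto_nhds_of_eventually_within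
    · exact ((continuous_id.sub continuous_const).tendsto' t 0 (by simp)).mono_left nhdsWithin_le_nhds
    · filter_upwards [self_mem_nhdsWithin] with s hs
      exact sub_pos.2 (mem_Ioi.1 hs)
  have := key.comp hmap
  apply this.congr
  intro s
  simp only [Function.comp, slope_def_field, div_eq_inv_mul]
  rw [add_sub_cancel]
  simp [smul_eq_mul]

theorem Phi_const (f : (Fin 3 → ℝ) → ℝ) {C : NNReal} (hf : LipschitzWith C f)
    (v x₀ : Fin 3 → ℝ) (r : ℝ) (U : Set (Fin 3 → ℝ))
    (hU : ∀ s ∈ Icc (0:ℝ) 1, ∀ x ∈ closedBall x₀ r, x + s • v ∈ U)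
    (hd : ∀ᵐ x ∂(volume : Measure (Fin 3 → ℝ)), x ∈ U → lineDeriv ℝ f x v = 0) :
    ∫ x in closedBall x₀ r, f (x + v) = ∫ x in closedBall x₀ r, f x := by
  set B := closedBall x₀ r with hB
  have hBc : IsCompact B := isCompact_closedBall _ _
  have hBm : MeasurableSet B := measurableSet_closedBall
  set Φ : ℝ → ℝ := fun s => ∫ x in B, f (x + s • v) with hΦ
  have hcont : ContinuousOn Φ (Icc 0 1) := by
    have hlip : LipschitzWith (C * ‖v‖₊ * (volume B).toNNReal) Φ := by
      apply LipschitzWith.of_dist_le_mul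
      intro s s'
      have hint : ∀ a : ℝ, IntegrableOn (fun x => f (x + a • v)) B volume := fun a =>
        ((hf.continuous.comp (continuous_id.add continuous_const)).continuousOn).integrableOn_compact hBc
      have : Φ s - Φ s' = ∫ x in B, (f (x + s • v) - f (x + s' • v)) := by
        rw [integral_sub (hint s) (hint s')]
      rw [dist_eq_norm, dist_eq_norm, this]
      calc ‖∫ x in B, (f (x + s • v) - f (x + s' • v))‖
          ≤ (C * ‖v‖ * |s - s'|) * (volume B).toReal := by
            apply norm_setIntegral_le_of_norm_le_const hBc.measure_lt_top
            · intro x _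
              calc ‖f (x + s • v) - f (x + s' • v)‖ ≤ C * ‖(x + s • v) - (x + s' • v)‖ :=
                  hf.norm_sub_le _ _
                _ = C * ‖v‖ * |s - s'| := by
                    rw [show (x + s • v) - (x + s' • v) = (s - s') • v by module,
                      norm_smul, Real.norm_eq_abs]; ring
          _ = ↑(C * ‖v‖₊ * (volume B).toNNReal) * ‖s - s'‖ := by
              push_cast
              rw [Real.norm_eq_abs]
              ring
    exact hlip.continuous.continuousOn
  have hderiv : ∀ t ∈ Ico (0:ℝ) 1, HasDerivWithinAt Φ 0 (Ici t) t := by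
    intro t ht
    have h1 := Phi_hasDerivWithinAt f hf v x₀ r t
    have h2 : ∫ x in B, lineDeriv ℝ f (x + t • v) v = 0 := by
      apply integral_eq_zero_of_ae
      have hd' : ∀ᵐ x ∂(volume : Measure (Fin 3 → ℝ)),
          x + t • v ∈ U → lineDeriv ℝ f (x + t • v) v = 0 :=
        (measurePreserving_add_right volume (t • v)).quasiMeasurePreserving.ae hd
      filter_upwards [ae_restrict_of_ae hd', ae_restrict_mem hBm] with x hx hxB
      exact hx (hU t ⟨ht.1, ht.2.le⟩ x hxB)
    rw [h2] at h1
    exact h1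
  have := constant_of_has_deriv_right_zero hcont hderiv 1 (by simp)
  simpa [hΦ] using this
theorem point_eq (f : (Fin 3 → ℝ) → ℝ) {C : NNReal} (hf : LipschitzWith C f)
    (v x₀ : Fin 3 → ℝ) (U : Set (Fin 3 → ℝ)) (r₀ : ℝ) (hr₀ : 0 < r₀)
    (hU : ∀ r ∈ Ioc (0:ℝ) r₀, ∀ s ∈ Icc (0:ℝ) 1, ∀ x ∈ closedBall x₀ r, x + s • v ∈ U)
    (hd : ∀ᵐ x ∂(volume : Measure (Fin 3 → ℝ)), x ∈ U → lineDeriv ℝ f x v = 0) :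
    f (x₀ + v) = f x₀ := by
  have key : ∀ r ∈ Ioc (0:ℝ) r₀, |f (x₀ + v) - f x₀| ≤ 2 * C * r := by
    intro r hr
    set B := closedBall x₀ r with hB
    have hBc : IsCompact B := isCompact_closedBall _ _
    have hBm : MeasurableSet B := measurableSet_closedBall
    have hvol : 0 < (volume B).toReal :=
      ENNReal.toReal_pos (measure_closedBall_pos volume x₀ hr.1).ne' hBc.measure_lt_top.ne
    have hPhi := Phi_const f hf v x₀ r U (hU r hr) hd
    have est : ∀ w : Fin 3 → ℝ, |(∫ x in B, f (x + w)) - (volume B).toReal * f (x₀ + w)|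
        ≤ C * r * (volume B).toReal := by
      intro w
      have hint : IntegrableOn (fun x => f (x + w)) B volume :=
        ((hf.continuous.comp (continuous_id.add continuous_const)).continuousOn).integrableOn_compact hBc
      have : (∫ x in B, f (x + w)) - (volume B).toReal * f (x₀ + w)
          = ∫ x in B, (f (x + w) - f (x₀ + w)) := by
        rw [integral_sub hint (integrableOn_const hBc.measure_lt_top.ne)]
        rw [setIntegral_const, smul_eq_mul]
        rfl
      rw [← Real.norm_eq_abs, this]
      apply norm_setIntegral_le_of_norm_le_const hBc.measure_lt_top
      · intro x hx
        calc ‖f (x + w) - f (x₀ + w)‖ ≤ C * ‖(x + w) - (x₀ + w)‖ := hf.norm_sub_le _ _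
          _ = C * ‖x - x₀‖ := by congr 2; abel
          _ ≤ C * r := by
              have : ‖x - x₀‖ ≤ r := by rw [← dist_eq_norm]; exact mem_closedBall.1 hx
              exact mul_le_mul_of_nonneg_left this C.coe_nonneg
    have e1 := est v
    have e0 := est 0
    simp only [add_zero] at e0
    have estv : ∀ x : Fin 3 → ℝ, f (x + 0) = f x := fun x => by rw [add_zero]
    have e0' : |(∫ x in B, f x) - (volume B).toReal * f x₀| ≤ C * r * (volume B).toReal := by
      simpa [estv] using e0
    have e1' : |(∫ x in B, f x) - (volume B).toReal * f (x₀ + v)| ≤ C * r * (volume B).toReal := by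
      rw [← hPhi]; exact e1
    have : |(volume B).toReal * f (x₀ + v) - (volume B).toReal * f x₀|
        ≤ 2 * C * r * (volume B).toReal := by
      calc |(volume B).toReal * f (x₀ + v) - (volume B).toReal * f x₀|
          ≤ |(volume B).toReal * f (x₀ + v) - ∫ x in B, f x|
            + |(∫ x in B, f x) - (volume B).toReal * f x₀| := abs_sub_le _ _ _
        _ ≤ C * r * (volume B).toReal + (C * r * (volume B).toReal) := by
            rw [abs_sub_comm]
            exact add_le_add e1' e0'
        _ = 2 * C * r * (volume B).toReal := by ring
    rw [← mul_sub, abs_mul, abs_of_pos hvol] at this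
    exact le_of_mul_le_mul_left (by linarith) hvol
  have habs : |f (x₀ + v) - f x₀| ≤ 0 := by
    apply le_of_forall_pos_le_add
    intro ε hε
    have hrmin : min r₀ (ε / (2 * C + 1)) ∈ Ioc (0:ℝ) r₀ :=
      ⟨lt_min hr₀ (div_pos hε (by positivity)), min_le_left _ _⟩
    calc |f (x₀ + v) - f x₀| ≤ 2 * C * min r₀ (ε / (2 * C + 1)) := key _ hrmin
      _ ≤ 2 * C * (ε / (2 * C + 1)) := by
          apply mul_le_mul_of_nonneg_left (min_le_right _ _) (by positivity)
      _ ≤ ε := by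
          have h2 : (0:ℝ) < 2 * C + 1 := by positivity
          rw [← mul_div_assoc, div_le_iff₀ h2]
          nlinarith [C.coe_nonneg, hε.le]
      _ ≤ 0 + ε := by linarith
  have := abs_nonneg (f (x₀ + v) - f x₀)
  have : f (x₀ + v) - f x₀ = 0 := abs_eq_zero.1 (le_antisymm habs this)
  linarith

theorem dot_abs_le (m u : Fin 3 → ℝ) : |u ⬝ᵥ m| ≤ ‖u‖ * (∑ i, |m i|) := by
  calc |u ⬝ᵥ m| ≤ (∑ i, |u i * m i|) := Finset.abs_sum_le_sum_abs _ _
    _ ≤ (∑ i, ‖u‖ * |m i|) := by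
        apply Finset.sum_le_sum
        intro i _
        rw [abs_mul]
        exact mul_le_mul_of_nonneg_right
          (by rw [← Real.norm_eq_abs]; exact norm_le_pi_norm u i) (abs_nonneg _)
    _ = ‖u‖ * (∑ i, |m i|) := by rw [Finset.mul_sum]

theorem const_on_halfspace (f : (Fin 3 → ℝ) → ℝ) {C : NNReal} (hf : LipschitzWith C f)
    (m : Fin 3 → ℝ)
    (hd : ∀ v : Fin 3 → ℝ, ∀ᵐ x ∂(volume : Measure (Fin 3 → ℝ)),
      x ⬝ᵥ m < 0 → lineDeriv ℝ f x v = 0)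
    {x₀ x₁ : Fin 3 → ℝ} (h0 : x₀ ⬝ᵥ m < 0) (h1 : x₁ ⬝ᵥ m < 0) : f x₁ = f x₀ := by
  set v := x₁ - x₀ with hv
  set K := ∑ i, |m i| with hK
  have hKnn : 0 ≤ K := Finset.sum_nonneg fun i _ => abs_nonneg _
  set δ := -max (x₀ ⬝ᵥ m) (x₁ ⬝ᵥ m) with hδ
  have hδpos : 0 < δ := by
    rw [hδ, neg_pos]
    exact max_lt h0 h1
  set r₀ := δ / (K + 1) with hr₀
  have hr₀pos : 0 < r₀ := div_pos hδpos (by linarith)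
  have hU : ∀ r ∈ Ioc (0:ℝ) r₀, ∀ s ∈ Icc (0:ℝ) 1, ∀ x ∈ closedBall x₀ r,
      (x + s • v) ∈ {x : Fin 3 → ℝ | x ⬝ᵥ m < 0} := by
    intro r hr s hs x hx
    have hxd : |(x - x₀) ⬝ᵥ m| ≤ K * r := by
      calc |(x - x₀) ⬝ᵥ m| ≤ ‖x - x₀‖ * K := dot_abs_le m _
        _ ≤ r * K := by
            apply mul_le_mul_of_nonneg_right _ hKnn
            rw [← dist_eq_norm]; exact mem_closedBall.1 hx
        _ = K * r := mul_comm _ _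
    have hexp : (x + s • v) ⬝ᵥ m
        = (1 - s) * (x₀ ⬝ᵥ m) + s * (x₁ ⬝ᵥ m) + (x - x₀) ⬝ᵥ m := by
      simp only [add_dotProduct, smul_dotProduct, sub_dotProduct,
        smul_eq_mul, hv]
      ring
    have hconv : (1 - s) * (x₀ ⬝ᵥ m) + s * (x₁ ⬝ᵥ m) ≤ -δ := by
      have hmax0 : x₀ ⬝ᵥ m ≤ -δ := by rw [hδ]; simp [le_max_left]
      have hmax1 : x₁ ⬝ᵥ m ≤ -δ := by rw [hδ]; simp [le_max_right]
      nlinarith [hs.1, hs.2]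
    have hKr : K * r ≤ K * r₀ := mul_le_mul_of_nonneg_left hr.2 hKnn
    have hKr₀ : K * r₀ < δ := by
      rw [hr₀, mul_div_assoc']
      rw [div_lt_iff₀ (by linarith : (0:ℝ) < K + 1)]
      nlinarith
    show (x + s • v) ⬝ᵥ m < 0
    have := abs_le.1 hxd
    rw [hexp]
    linarith [this.2]
  have := point_eq f hf v x₀ {x : Fin 3 → ℝ | x ⬝ᵥ m < 0} r₀ hr₀pos hU (hd v)
  rw [hv] at this
  simpa using this
/-- Hadamard jump condition: if a Lipschitz map `y : ℝ³ → ℝ³` has gradient `F₁`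
a.e. on the half-space `{x ⬝ m < 0}` and `F₂` a.e. on `{x ⬝ m > 0}` for a unit
vector `m`, then `F₁ - F₂ = b ⊗ m` for some `b`. -/
theorem hadamard_jump_condition
    (y : (Fin 3 → ℝ) → (Fin 3 → ℝ)) (C : NNReal) (hy : LipschitzWith C y)
    (F₁ F₂ : Matrix (Fin 3) (Fin 3) ℝ) (m : Fin 3 → ℝ) (hm : m ⬝ᵥ m = 1)
    (h₁ : ∀ᵐ x ∂(volume : Measure (Fin 3 → ℝ)), x ⬝ᵥ m < 0 →
      HasFDerivAt y (LinearMap.toContinuousLinearMap F₁.mulVecLin) x)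
    (h₂ : ∀ᵐ x ∂(volume : Measure (Fin 3 → ℝ)), 0 < x ⬝ᵥ m →
      HasFDerivAt y (LinearMap.toContinuousLinearMap F₂.mulVecLin) x) :
    ∃ b : Fin 3 → ℝ, F₁ - F₂ = vecMulVec b m := by
  classical
  -- component Lipschitz data
  have heval : ∀ i : Fin 3, LipschitzWith 1 (fun w : Fin 3 → ℝ => w i) := by
    intro i
    apply LipschitzWith.of_dist_le_mul
    intro a b
    rw [NNReal.coe_one, one_mul]
    exact dist_le_pi_dist a b i
  have hglip : ∀ (F : Matrix (Fin 3) (Fin 3) ℝ) (i : Fin 3),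
      ∃ D : NNReal, LipschitzWith D (fun x => y x i - (F *ᵥ x) i) := by
    intro F i
    have hlin : LipschitzWith ⟨∑ j, |F i j|, Finset.sum_nonneg fun j _ => abs_nonneg _⟩
        (fun x : Fin 3 → ℝ => (F *ᵥ x) i) := by
      apply LipschitzWith.of_dist_le_mul
      intro a b
      rw [dist_eq_norm, dist_eq_norm, Real.norm_eq_abs]
      have : (F *ᵥ a) i - (F *ᵥ b) i = (a - b) ⬝ᵥ F i := by
        simp only [Matrix.mulVec, dotProduct, sub_dotProduct]
        rw [← Finset.sum_sub_distrib]
        exact Finset.sum_congr rfl fun x _ => by simp [Pi.sub_apply]; ring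
      rw [this]
      exact (dot_abs_le (F i) (a - b)).trans (le_of_eq (mul_comm _ _))
    exact ⟨_, ((heval i).comp hy).sub hlin⟩
  -- line derivative vanishing on halfspaces
  have hline : ∀ (F : Matrix (Fin 3) (Fin 3) ℝ) (m' : Fin 3 → ℝ)
      (h : ∀ᵐ x ∂(volume : Measure (Fin 3 → ℝ)), x ⬝ᵥ m' < 0 →
        HasFDerivAt y (LinearMap.toContinuousLinearMap F.mulVecLin) x)
      (i : Fin 3) (v : Fin 3 → ℝ),
      ∀ᵐ x ∂(volume : Measure (Fin 3 → ℝ)), x ⬝ᵥ m' < 0 →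
        lineDeriv ℝ (fun x => y x i - (F *ᵥ x) i) x v = 0 := by
    intro F m' h i v
    filter_upwards [h] with x hx hlt
    have hx' := hx hlt
    set A := LinearMap.toContinuousLinearMap F.mulVecLin with hA
    have hyi : HasFDerivAt (fun z => y z i) ((ContinuousLinearMap.proj i).comp A) x :=
      (ContinuousLinearMap.proj i (R := ℝ) (φ := fun _ : Fin 3 => ℝ)).hasFDerivAt.comp x hx'
    have hli : HasFDerivAt (fun z : Fin 3 → ℝ => (F *ᵥ z) i)
        ((ContinuousLinearMap.proj i).comp A) x := by
      have := ((ContinuousLinearMap.proj i (R := ℝ) (φ := fun _ : Fin 3 => ℝ)).comp A).hasFDerivAt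
        (x := x)
      apply this.congr_of_eventuallyEq
      filter_upwards with z
      simp [hA, Matrix.mulVecLin_apply]
    have hsub : HasFDerivAt (fun z => y z i - (F *ᵥ z) i) (0 : (Fin 3 → ℝ) →L[ℝ] ℝ) x := by
      have h := hyi.sub hli; rw [sub_self] at h; exact h
    have := (hsub.hasLineDerivAt v).lineDeriv
    simpa using this
  -- affine on each halfspace
  have haff₁ : ∀ x : Fin 3 → ℝ, x ⬝ᵥ m < 0 → ∀ i,
      y x i - (F₁ *ᵥ x) i = y (-m) i - (F₁ *ᵥ (-m)) i := by
    intro x hx i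
    obtain ⟨D, hD⟩ := hglip F₁ i
    exact const_on_halfspace _ hD m (hline F₁ m h₁ i)
      (by rw [neg_dotProduct, hm]; norm_num) hx
  have h₂' : ∀ᵐ x ∂(volume : Measure (Fin 3 → ℝ)), x ⬝ᵥ (-m) < 0 →
      HasFDerivAt y (LinearMap.toContinuousLinearMap F₂.mulVecLin) x := by
    filter_upwards [h₂] with x hx hlt
    exact hx (by rw [dotProduct_neg] at hlt; linarith)
  have haff₂ : ∀ x : Fin 3 → ℝ, 0 < x ⬝ᵥ m → ∀ i,
      y x i - (F₂ *ᵥ x) i = y m i - (F₂ *ᵥ m) i := by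
    intro x hx i
    obtain ⟨D, hD⟩ := hglip F₂ i
    exact const_on_halfspace _ hD (-m) (hline F₂ (-m) h₂' i)
      (by rw [dotProduct_neg, hm]; norm_num)
      (by rw [dotProduct_neg]; linarith)
  -- boundary values by continuity
  have hAcont : ∀ F : Matrix (Fin 3) (Fin 3) ℝ, Continuous (fun z : Fin 3 → ℝ => F *ᵥ z) :=
    fun F => (LinearMap.toContinuousLinearMap F.mulVecLin).continuous
  have hbd₁ : ∀ x : Fin 3 → ℝ, x ⬝ᵥ m = 0 → ∀ i,
      y x i - (F₁ *ᵥ x) i = y (-m) i - (F₁ *ᵥ (-m)) i := by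
    intro x hx i
    have hc : Continuous (fun t : ℝ => y (x - t • m) i - (F₁ *ᵥ (x - t • m)) i) := by
      have hpath : Continuous (fun t : ℝ => x - t • m) :=
        continuous_const.sub (continuous_id.smul continuous_const)
      exact ((continuous_apply i).comp (hy.continuous.comp hpath)).sub
        ((continuous_apply i).comp ((hAcont F₁).comp hpath))
    have hlim : Filter.Tendsto (fun t : ℝ => y (x - t • m) i - (F₁ *ᵥ (x - t • m)) i)
        (nhdsWithin 0 (Ioi 0)) (nhds (y x i - (F₁ *ᵥ x) i)) := by
      have h0 : Filter.Tendsto (fun t : ℝ => y (x - t • m) i - (F₁ *ᵥ (x - t • m)) i)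
          (nhdsWithin 0 (Ioi 0)) (nhds (y (x - (0:ℝ) • m) i - (F₁ *ᵥ (x - (0:ℝ) • m)) i)) :=
        (hc.tendsto 0).mono_left nhdsWithin_le_nhds
      simpa using h0
    have hev : ∀ᶠ t in nhdsWithin (0:ℝ) (Ioi 0),
        y (x - t • m) i - (F₁ *ᵥ (x - t • m)) i = y (-m) i - (F₁ *ᵥ (-m)) i := by
      filter_upwards [self_mem_nhdsWithin] with t ht
      apply haff₁
      rw [sub_dotProduct, smul_dotProduct, hx, hm, smul_eq_mul]
      simpa using ht
    exact tendsto_nhds_unique (hlim.congr' hev) tendsto_const_nhds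
  have hbd₂ : ∀ x : Fin 3 → ℝ, x ⬝ᵥ m = 0 → ∀ i,
      y x i - (F₂ *ᵥ x) i = y m i - (F₂ *ᵥ m) i := by
    intro x hx i
    have hc : Continuous (fun t : ℝ => y (x + t • m) i - (F₂ *ᵥ (x + t • m)) i) := by
      have hpath : Continuous (fun t : ℝ => x + t • m) :=
        continuous_const.add (continuous_id.smul continuous_const)
      exact ((continuous_apply i).comp (hy.continuous.comp hpath)).sub
        ((continuous_apply i).comp ((hAcont F₂).comp hpath))
    have hlim : Filter.Tendsto (fun t : ℝ => y (x + t • m) i - (F₂ *ᵥ (x + t • m)) i)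
        (nhdsWithin 0 (Ioi 0)) (nhds (y x i - (F₂ *ᵥ x) i)) := by
      have h0 : Filter.Tendsto (fun t : ℝ => y (x + t • m) i - (F₂ *ᵥ (x + t • m)) i)
          (nhdsWithin 0 (Ioi 0)) (nhds (y (x + (0:ℝ) • m) i - (F₂ *ᵥ (x + (0:ℝ) • m)) i)) :=
        (hc.tendsto 0).mono_left nhdsWithin_le_nhds
      simpa using h0
    have hev : ∀ᶠ t in nhdsWithin (0:ℝ) (Ioi 0),
        y (x + t • m) i - (F₂ *ᵥ (x + t • m)) i = y m i - (F₂ *ᵥ m) i := by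
      filter_upwards [self_mem_nhdsWithin] with t ht
      apply haff₂
      rw [add_dotProduct, smul_dotProduct, hx, hm, smul_eq_mul]
      simpa using ht
    exact tendsto_nhds_unique (hlim.congr' hev) tendsto_const_nhds
  -- the constants agree (evaluate at 0)
  have hzero : (0 : Fin 3 → ℝ) ⬝ᵥ m = 0 := zero_dotProduct m
  have hcc : ∀ i, y (-m) i - (F₁ *ᵥ (-m)) i = y m i - (F₂ *ᵥ m) i := by
    intro i
    have hb1 := (hbd₁ 0 hzero i).symm
    have hb2 := (hbd₂ 0 hzero i).symm
    rw [Matrix.mulVec_zero] at hb1 hb2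
    simp only [Pi.zero_apply, sub_zero] at hb1 hb2
    linarith
  -- equality of matrices on the plane
  have hplane : ∀ x : Fin 3 → ℝ, x ⬝ᵥ m = 0 → F₁ *ᵥ x = F₂ *ᵥ x := by
    intro x hx
    funext i
    have e1 := hbd₁ x hx i
    have e2 := hbd₂ x hx i
    have := hcc i
    linarith
  -- conclude
  refine ⟨(F₁ - F₂) *ᵥ m, ?_⟩
  ext i j
  set u : Fin 3 → ℝ := Pi.single j 1 with hu
  set w : Fin 3 → ℝ := u - (m j) • m with hw
  have hwm : w ⬝ᵥ m = 0 := by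
    rw [hw, sub_dotProduct, smul_dotProduct, hm, hu,
      single_dotProduct, smul_eq_mul]
    ring
  have hpw := hplane w hwm
  have hFw : (F₁ - F₂) *ᵥ w = 0 := by
    rw [Matrix.sub_mulVec, hpw, sub_self]
  have hdecomp : u = (m j) • m + w := by rw [hw]; abel
  have : (F₁ - F₂) *ᵥ u = (m j) • ((F₁ - F₂) *ᵥ m) := by
    rw [hdecomp, Matrix.mulVec_add, Matrix.mulVec_smul, hFw, add_zero]
  have happ := congrFun this i
  rw [hu, Matrix.mulVec_single] at happ
  simp only [mul_one, Pi.smul_apply, smul_eq_mul, op_smul_eq_mul, Matrix.col_apply] at happ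
  rw [Matrix.vecMulVec_apply, happ]
  ring
end

section
/- Let a₁, a₂, φ̂₁, φ̂₂, n₁, n₂, ψ₁, ψ₂ ∈ ℝ³ with rank(a₁ ⊗ n₁ - a₂ ⊗ n₂) = 2. If there exist s₁, s₂ ∈ ℝ such that rank(a₁ ⊗ n₁ - a₂ ⊗ n₂ + s₁ φ̂₁ ⊗ ψ₁ - s₂ φ̂₂ ⊗ ψ₂) ≤ 1, then at least one of the following four conditions holds: (i) φ̂₁·(a₁×a₂) = φ̂₂·(a₁×a₂) = 0; (ii) φ̂₁·(a₁×a₂) = ψ₁·(n₁×n₂) = 0; (iii) φ̂₂·(a₁×a₂) = ψ₂·(n₁×n₂) = 0; (iv) ψ₁·(n₁×n₂) = ψ₂·(n₁×n₂) = 0. -/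
open Matrix

namespace PlasticCompat

abbrev V3 := Fin 3 → ℝ
abbrev M3 := Matrix (Fin 3) (Fin 3) ℝ

lemma rank_vmv_le (u v : V3) : (vecMulVec u v).rank ≤ 1 := by
  rw [vecMulVec_eq Unit]
  refine (Matrix.rank_mul_le_left _ _).trans ?_
  simpa using Matrix.rank_le_card_width (Matrix.replicateCol Unit u)

lemma vmv_trans (u v : V3) : (vecMulVec u v)ᵀ = vecMulVec v u := by
  ext i j; simp [vecMulVec_apply, Matrix.transpose_apply, mul_comm]

lemma smul_vmv (s : ℝ) (u v : V3) : s • vecMulVec u v = vecMulVec (s • u) v := by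
  ext i j
  simp only [Matrix.smul_apply, vecMulVec_apply, Pi.smul_apply, smul_eq_mul]
  ring

lemma vecMul_vmv (x u v : V3) : x ᵥ* vecMulVec u v = (x ⬝ᵥ u) • v := by
  ext j
  simp only [Matrix.vecMul, dotProduct, vecMulVec_apply, Pi.smul_apply, smul_eq_mul,
    Finset.sum_mul]
  exact Finset.sum_congr rfl fun i _ => by ring

lemma vmv_mulVec (u v x : V3) : vecMulVec u v *ᵥ x = (v ⬝ᵥ x) • u := by
  ext i
  simp only [Matrix.mulVec, dotProduct, vecMulVec_apply, Pi.smul_apply, smul_eq_mul,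
    Finset.sum_mul]
  exact Finset.sum_congr rfl fun k _ => by ring

lemma exists_vmv {M : M3} (h : M.rank ≤ 1) : ∃ u v : V3, M = vecMulVec u v := by
  rw [Matrix.rank] at h
  rw [show (1:ℕ) = Module.finrank ℝ ℝ by simp] at h
  obtain ⟨u₀, hu⟩ := finrank_le_one_iff.mp (by simpa using h)
  refine ⟨(u₀ : V3), fun j => Classical.choose (hu ⟨M *ᵥ Pi.single j 1,
    LinearMap.mem_range_self _ _⟩), ?_⟩
  ext i j
  have hspec := Classical.choose_spec (hu ⟨M *ᵥ Pi.single j 1,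
    LinearMap.mem_range_self M.mulVecLin (Pi.single j 1)⟩)
  have := congrFun (congrArg Subtype.val hspec) i
  simp only [Submodule.coe_smul, Pi.smul_apply, smul_eq_mul] at this
  rw [vecMulVec_apply, mul_comm, this]
  simp [Matrix.mulVec, dotProduct, Pi.single_apply]

lemma dep_or (y w : V3) :
    (∃ a : ℝ, w = a • y ∨ y = a • w) ∨ (∀ α β : ℝ, α • y + β • w = 0 → α = 0 ∧ β = 0) := by
  by_cases hd : ∃ a : ℝ, w = a • y ∨ y = a • w
  · exact Or.inl hd
  · push_neg at hd
    refine Or.inr fun α β hab => ?_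
    have hα : α = 0 := by
      by_contra hα
      exact (hd (-β/α)).2 (by
        funext i
        have := congrFun hab i
        simp only [Pi.add_apply, Pi.smul_apply, smul_eq_mul, Pi.zero_apply] at this ⊢
        field_simp
        linarith)
    subst hα
    refine ⟨rfl, ?_⟩
    by_contra hβ
    exact (hd 0).1 (by
      funext i
      have := congrFun hab i
      simp only [Pi.add_apply, Pi.smul_apply, smul_eq_mul, Pi.zero_apply, zero_mul] at this ⊢
      have : β * w i = 0 := by linarith
      rcases mul_eq_zero.mp this with h | h
      · exact absurd h hβ
      · exact h)

lemma indep_right {A : M3} (x y z w : V3) (hA : A = vecMulVec x y + vecMulVec z w)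
    (h2 : A.rank = 2) : ∀ α β : ℝ, α • y + β • w = 0 → α = 0 ∧ β = 0 := by
  rcases dep_or y w with ⟨a, h | h⟩ | h
  · exfalso
    have : A = vecMulVec (x + a • z) y := by
      rw [hA, h]; ext i j; simp [vecMulVec_apply]; ring
    have := this ▸ rank_vmv_le (x + a • z) y
    omega
  · exfalso
    have : A = vecMulVec (z + a • x) w := by
      rw [hA, h]; ext i j; simp [vecMulVec_apply]; ring
    have := this ▸ rank_vmv_le (z + a • x) w
    omega
  · exact h

lemma indep_left {A : M3} (x y z w : V3) (hA : A = vecMulVec x y + vecMulVec z w)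
    (h2 : A.rank = 2) : ∀ α β : ℝ, α • x + β • z = 0 → α = 0 ∧ β = 0 := by
  refine indep_right y x w z (A := Aᵀ) ?_ ?_
  · rw [hA, Matrix.transpose_add, vmv_trans, vmv_trans]
  · rw [Matrix.rank_transpose, h2]

lemma aux {A : M3} (u v φ₁ φ₂ ψ₁ ψ₂ d : V3) {s₁ s₂ p₁ p₂ : ℝ}
    (hs₁ : s₁ ≠ 0) (hs₂ : s₂ ≠ 0)
    (hE : A = vecMulVec u v - s₁ • vecMulVec φ₁ ψ₁ + s₂ • vecMulVec φ₂ ψ₂)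
    (h2 : A.rank = 2)
    (hR1 : (s₁ * p₁) • ψ₁ = (s₂ * p₂) • ψ₂)
    (hR2 : (v ⬝ᵥ d) • u = (s₁ * (ψ₁ ⬝ᵥ d)) • φ₁ - (s₂ * (ψ₂ ⬝ᵥ d)) • φ₂) :
    (p₁ = 0 ∧ p₂ = 0) ∨ (ψ₁ ⬝ᵥ d = 0 ∧ ψ₂ ⬝ᵥ d = 0) := by
  rcases dep_or ψ₁ ψ₂ with ⟨a, h | h⟩ | hind
  · right
    have hA' : A = vecMulVec u v + vecMulVec ((s₂ * a) • φ₂ - s₁ • φ₁) ψ₁ := by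
      rw [hE, h]; ext i j
      simp only [Matrix.add_apply, Matrix.sub_apply, Matrix.smul_apply, vecMulVec_apply,
        Pi.sub_apply, Pi.smul_apply, smul_eq_mul]
      ring
    have hq₂ : ψ₂ ⬝ᵥ d = a * (ψ₁ ⬝ᵥ d) := by rw [h]; simp
    have hcomb : (v ⬝ᵥ d) • u + (ψ₁ ⬝ᵥ d) • ((s₂ * a) • φ₂ - s₁ • φ₁) = 0 := by
      rw [hR2, hq₂]; funext i
      simp only [Pi.add_apply, Pi.sub_apply, Pi.smul_apply, smul_eq_mul, Pi.zero_apply]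
      ring
    obtain ⟨-, hq₁⟩ := indep_left u v _ ψ₁ hA' h2 _ _ hcomb
    exact ⟨hq₁, by rw [hq₂, hq₁, mul_zero]⟩
  · right
    have hA' : A = vecMulVec u v + vecMulVec (s₂ • φ₂ - (s₁ * a) • φ₁) ψ₂ := by
      rw [hE, h]; ext i j
      simp only [Matrix.add_apply, Matrix.sub_apply, Matrix.smul_apply, vecMulVec_apply,
        Pi.sub_apply, Pi.smul_apply, smul_eq_mul]
      ring
    have hq₁ : ψ₁ ⬝ᵥ d = a * (ψ₂ ⬝ᵥ d) := by rw [h]; simp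
    have hcomb : (v ⬝ᵥ d) • u + (ψ₂ ⬝ᵥ d) • (s₂ • φ₂ - (s₁ * a) • φ₁) = 0 := by
      rw [hR2, hq₁]; funext i
      simp only [Pi.add_apply, Pi.sub_apply, Pi.smul_apply, smul_eq_mul, Pi.zero_apply]
      ring
    obtain ⟨-, hq₂⟩ := indep_left u v _ ψ₂ hA' h2 _ _ hcomb
    exact ⟨by rw [hq₁, hq₂, mul_zero], hq₂⟩
  · left
    have h0 : (s₁ * p₁) • ψ₁ + (-(s₂ * p₂)) • ψ₂ = 0 := by
      rw [neg_smul, hR1, add_neg_cancel]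
    obtain ⟨h1, h2'⟩ := hind _ _ h0
    constructor
    · rcases mul_eq_zero.mp h1 with h | h
      · exact absurd h hs₁
      · exact h
    · have : s₂ * p₂ = 0 := by linarith
      rcases mul_eq_zero.mp this with h | h
      · exact absurd h hs₂
      · exact h

end PlasticCompat

open PlasticCompat

/-- Lemma 4.1: necessary conditions for the rank-one compatibility of a
two-fold incompatible matrix after two simple shears. -/
theorem necessary_conditions_plastic_compatibility
    (a₁ a₂ φ₁ φ₂ n₁ n₂ ψ₁ ψ₂ : Fin 3 → ℝ)
    (hrank : (vecMulVec a₁ n₁ - vecMulVec a₂ n₂).rank = 2)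
    (s₁ s₂ : ℝ)
    (h : (vecMulVec a₁ n₁ - vecMulVec a₂ n₂
        + s₁ • vecMulVec φ₁ ψ₁ - s₂ • vecMulVec φ₂ ψ₂).rank ≤ 1) :
    (φ₁ ⬝ᵥ crossProduct a₁ a₂ = 0 ∧ φ₂ ⬝ᵥ crossProduct a₁ a₂ = 0) ∨
    (φ₁ ⬝ᵥ crossProduct a₁ a₂ = 0 ∧ ψ₁ ⬝ᵥ crossProduct n₁ n₂ = 0) ∨
    (φ₂ ⬝ᵥ crossProduct a₁ a₂ = 0 ∧ ψ₂ ⬝ᵥ crossProduct n₁ n₂ = 0) ∨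
    (ψ₁ ⬝ᵥ crossProduct n₁ n₂ = 0 ∧ ψ₂ ⬝ᵥ crossProduct n₁ n₂ = 0) := by
  classical
  set c : V3 := crossProduct a₁ a₂ with hc
  set d : V3 := crossProduct n₁ n₂ with hd
  set A : M3 := vecMulVec a₁ n₁ - vecMulVec a₂ n₂ with hAdef
  obtain ⟨u, v, huv⟩ := exists_vmv h
  have hE : A = vecMulVec u v - s₁ • vecMulVec φ₁ ψ₁ + s₂ • vecMulVec φ₂ ψ₂ := by
    rw [← huv]; abel
  have hE' : A = vecMulVec u v - vecMulVec (s₁ • φ₁) ψ₁ + vecMulVec (s₂ • φ₂) ψ₂ := by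
    rw [hE, smul_vmv, smul_vmv]
  -- dot product facts
  have hca₁ : c ⬝ᵥ a₁ = 0 := by rw [hc, dotProduct_comm]; exact dot_self_cross a₁ a₂
  have hca₂ : c ⬝ᵥ a₂ = 0 := by rw [hc, dotProduct_comm]; exact dot_cross_self a₁ a₂
  have hdn₁ : n₁ ⬝ᵥ d = 0 := by rw [hd]; exact dot_self_cross n₁ n₂
  have hdn₂ : n₂ ⬝ᵥ d = 0 := by rw [hd]; exact dot_cross_self n₁ n₂
  -- the two fundamental relations
  have hvA0 : c ᵥ* A = 0 := by
    rw [hAdef, Matrix.vecMul_sub, vecMul_vmv, vecMul_vmv, hca₁, hca₂]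
    simp
  have hvA1 : c ᵥ* A = (c ⬝ᵥ u) • v - (s₁ * (c ⬝ᵥ φ₁)) • ψ₁ + (s₂ * (c ⬝ᵥ φ₂)) • ψ₂ := by
    rw [hE', Matrix.vecMul_add, Matrix.vecMul_sub, vecMul_vmv, vecMul_vmv, vecMul_vmv,
      dotProduct_smul, dotProduct_smul, smul_eq_mul, smul_eq_mul]
  have hR1 : (c ⬝ᵥ u) • v = (s₁ * (c ⬝ᵥ φ₁)) • ψ₁ - (s₂ * (c ⬝ᵥ φ₂)) • ψ₂ := by
    have h0 := hvA1.symm.trans hvA0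
    funext i
    have := congrFun h0 i
    simp only [Pi.add_apply, Pi.sub_apply, Pi.smul_apply, smul_eq_mul, Pi.zero_apply] at this ⊢
    linarith
  have hMd0 : A *ᵥ d = 0 := by
    rw [hAdef, Matrix.sub_mulVec, vmv_mulVec, vmv_mulVec, hdn₁, hdn₂]
    simp
  have hMd1 : A *ᵥ d = (v ⬝ᵥ d) • u - (s₁ * (ψ₁ ⬝ᵥ d)) • φ₁ + (s₂ * (ψ₂ ⬝ᵥ d)) • φ₂ := by
    rw [hE', Matrix.add_mulVec, Matrix.sub_mulVec, vmv_mulVec, vmv_mulVec, vmv_mulVec,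
      smul_smul, smul_smul, mul_comm (ψ₁ ⬝ᵥ d) s₁, mul_comm (ψ₂ ⬝ᵥ d) s₂]
  have hR2 : (v ⬝ᵥ d) • u = (s₁ * (ψ₁ ⬝ᵥ d)) • φ₁ - (s₂ * (ψ₂ ⬝ᵥ d)) • φ₂ := by
    have h0 := hMd1.symm.trans hMd0
    funext i
    have := congrFun h0 i
    simp only [Pi.add_apply, Pi.sub_apply, Pi.smul_apply, smul_eq_mul, Pi.zero_apply] at this ⊢
    linarith
  by_cases hs₁ : s₁ = 0
  · by_cases hs₂ : s₂ = 0
    · exfalso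
      have : A = vecMulVec u v := by rw [hE, hs₁, hs₂]; simp
      have := this ▸ rank_vmv_le u v
      omega
    · -- conclusion (iii)
      subst hs₁
      have hA' : A = vecMulVec u v + vecMulVec (s₂ • φ₂) ψ₂ := by
        rw [hE']; ext i j
        simp only [Matrix.add_apply, Matrix.sub_apply, vecMulVec_apply, Pi.smul_apply,
          smul_eq_mul, zero_mul]
        ring
      have hp₂ : c ⬝ᵥ φ₂ = 0 := by
        have hcomb : (c ⬝ᵥ u) • v + (s₂ * (c ⬝ᵥ φ₂)) • ψ₂ = 0 := by
          rw [hR1]; funext i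
          simp only [Pi.add_apply, Pi.sub_apply, Pi.smul_apply, smul_eq_mul, Pi.zero_apply,
            zero_mul]
          ring
        obtain ⟨-, h2⟩ := indep_right u v (s₂ • φ₂) ψ₂ hA' hrank _ _ hcomb
        rcases mul_eq_zero.mp h2 with h' | h'
        · exact absurd h' hs₂
        · exact h'
      have hq₂ : ψ₂ ⬝ᵥ d = 0 := by
        have hcomb : (v ⬝ᵥ d) • u + (ψ₂ ⬝ᵥ d) • (s₂ • φ₂) = 0 := by
          rw [hR2]; funext i
          simp only [Pi.add_apply, Pi.sub_apply, Pi.smul_apply, smul_eq_mul, Pi.zero_apply,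
            zero_mul]
          ring
        obtain ⟨-, h2⟩ := indep_left u v (s₂ • φ₂) ψ₂ hA' hrank _ _ hcomb
        exact h2
      exact Or.inr (Or.inr (Or.inl ⟨by rw [dotProduct_comm]; exact hp₂, hq₂⟩))
  · by_cases hs₂ : s₂ = 0
    · -- conclusion (ii)
      subst hs₂
      have hA' : A = vecMulVec u v + vecMulVec ((-s₁) • φ₁) ψ₁ := by
        rw [hE']; ext i j
        simp only [Matrix.add_apply, Matrix.sub_apply, vecMulVec_apply, Pi.smul_apply,
          smul_eq_mul, zero_mul]
        ring
      have hp₁ : c ⬝ᵥ φ₁ = 0 := by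
        have hcomb : (c ⬝ᵥ u) • v + (-(s₁ * (c ⬝ᵥ φ₁))) • ψ₁ = 0 := by
          rw [hR1]; funext i
          simp only [Pi.add_apply, Pi.sub_apply, Pi.smul_apply, smul_eq_mul, Pi.zero_apply,
            zero_mul]
          ring
        obtain ⟨-, h2⟩ := indep_right u v ((-s₁) • φ₁) ψ₁ hA' hrank _ _ hcomb
        have : s₁ * (c ⬝ᵥ φ₁) = 0 := by linarith
        rcases mul_eq_zero.mp this with h' | h'
        · exact absurd h' hs₁
        · exact h'
      have hq₁ : ψ₁ ⬝ᵥ d = 0 := by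
        have hcomb : (v ⬝ᵥ d) • u + (ψ₁ ⬝ᵥ d) • ((-s₁) • φ₁) = 0 := by
          rw [hR2]; funext i
          simp only [Pi.add_apply, Pi.sub_apply, Pi.smul_apply, smul_eq_mul, Pi.zero_apply,
            zero_mul]
          ring
        obtain ⟨-, h2⟩ := indep_left u v ((-s₁) • φ₁) ψ₁ hA' hrank _ _ hcomb
        exact h2
      exact Or.inr (Or.inl ⟨by rw [dotProduct_comm]; exact hp₁, hq₁⟩)
    · -- main case : both shears active
      have hcuvd : (c ⬝ᵥ u) * (v ⬝ᵥ d)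
          = s₁ * (c ⬝ᵥ φ₁) * (ψ₁ ⬝ᵥ d) - s₂ * (c ⬝ᵥ φ₂) * (ψ₂ ⬝ᵥ d) := by
        have h0 := congrArg (fun w => w ⬝ᵥ d) hR1
        simp only [smul_dotProduct, sub_dotProduct, smul_eq_mul] at h0
        linarith [h0]
      have ht : s₁ * (c ⬝ᵥ φ₁) * (ψ₁ ⬝ᵥ d) - s₂ * (c ⬝ᵥ φ₂) * (ψ₂ ⬝ᵥ d) = 0 := by
        by_contra ht
        have key : (s₁ * (c ⬝ᵥ φ₁) * (ψ₁ ⬝ᵥ d) - s₂ * (c ⬝ᵥ φ₂) * (ψ₂ ⬝ᵥ d)) • vecMulVec u v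
            = vecMulVec ((s₁ * (ψ₁ ⬝ᵥ d)) • φ₁ - (s₂ * (ψ₂ ⬝ᵥ d)) • φ₂)
                ((s₁ * (c ⬝ᵥ φ₁)) • ψ₁ - (s₂ * (c ⬝ᵥ φ₂)) • ψ₂) := by
          rw [← hR2, ← hR1]
          ext i j
          simp only [Matrix.smul_apply, vecMulVec_apply, Pi.smul_apply, smul_eq_mul]
          linear_combination (-(u i * v j)) * hcuvd
        have key2 : (s₁ * (c ⬝ᵥ φ₁) * (ψ₁ ⬝ᵥ d) - s₂ * (c ⬝ᵥ φ₂) * (ψ₂ ⬝ᵥ d)) • A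
            = vecMulVec ((s₁ * s₂) • ((c ⬝ᵥ φ₂) • φ₁ - (c ⬝ᵥ φ₁) • φ₂))
                ((ψ₂ ⬝ᵥ d) • ψ₁ - (ψ₁ ⬝ᵥ d) • ψ₂) := by
          ext i j
          have hk := congrFun (congrFun key i) j
          simp only [Matrix.smul_apply, vecMulVec_apply, Pi.sub_apply, Pi.smul_apply,
            smul_eq_mul] at hk
          rw [hE]
          simp only [Matrix.smul_apply, Matrix.add_apply, Matrix.sub_apply, vecMulVec_apply,
            Pi.sub_apply, Pi.smul_apply, smul_eq_mul]
          linear_combination hk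
        have hAle : A.rank ≤ 1 := by
          have hAeq : A = vecMulVec
              (((s₁ * (c ⬝ᵥ φ₁) * (ψ₁ ⬝ᵥ d) - s₂ * (c ⬝ᵥ φ₂) * (ψ₂ ⬝ᵥ d))⁻¹ * (s₁ * s₂))
                • ((c ⬝ᵥ φ₂) • φ₁ - (c ⬝ᵥ φ₁) • φ₂))
              ((ψ₂ ⬝ᵥ d) • ψ₁ - (ψ₁ ⬝ᵥ d) • ψ₂) := by
            ext i j
            have hk2 := congrFun (congrFun key2 i) j
            simp only [Matrix.smul_apply, vecMulVec_apply, Pi.sub_apply, Pi.smul_apply,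
              smul_eq_mul] at hk2
            simp only [vecMulVec_apply, Pi.sub_apply, Pi.smul_apply, smul_eq_mul]
            rw [show A i j = (s₁ * (c ⬝ᵥ φ₁) * (ψ₁ ⬝ᵥ d) - s₂ * (c ⬝ᵥ φ₂) * (ψ₂ ⬝ᵥ d))⁻¹
                * ((s₁ * (c ⬝ᵥ φ₁) * (ψ₁ ⬝ᵥ d) - s₂ * (c ⬝ᵥ φ₂) * (ψ₂ ⬝ᵥ d)) * A i j) from
              (inv_mul_cancel_left₀ ht (A i j)).symm, hk2]
            ring
          rw [hAeq]
          exact rank_vmv_le _ _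
        omega
      rw [ht] at hcuvd
      rcases mul_eq_zero.mp hcuvd with hcu | hvd
      · -- c ⬝ᵥ u = 0
        have hR1' : (s₁ * (c ⬝ᵥ φ₁)) • ψ₁ = (s₂ * (c ⬝ᵥ φ₂)) • ψ₂ := by
          funext i
          have := congrFun hR1 i
          simp only [hcu, Pi.sub_apply, Pi.smul_apply, smul_eq_mul, zero_mul] at this ⊢
          linarith
        rcases aux u v φ₁ φ₂ ψ₁ ψ₂ d hs₁ hs₂ hE hrank hR1' hR2 with ⟨h1, h2⟩ | ⟨h1, h2⟩
        · exact Or.inl ⟨by rw [dotProduct_comm]; exact h1, by rw [dotProduct_comm]; exact h2⟩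
        · exact Or.inr (Or.inr (Or.inr ⟨h1, h2⟩))
      · -- v ⬝ᵥ d = 0
        have hET : Aᵀ = vecMulVec v u - s₁ • vecMulVec ψ₁ φ₁ + s₂ • vecMulVec ψ₂ φ₂ := by
          rw [hE, Matrix.transpose_add, Matrix.transpose_sub, Matrix.transpose_smul,
            Matrix.transpose_smul, vmv_trans, vmv_trans, vmv_trans]
        have hrankT : Aᵀ.rank = 2 := by rw [Matrix.rank_transpose]; exact hrank
        have hR2' : (s₁ * (ψ₁ ⬝ᵥ d)) • φ₁ = (s₂ * (ψ₂ ⬝ᵥ d)) • φ₂ := by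
          funext i
          have := congrFun hR2 i
          simp only [hvd, Pi.sub_apply, Pi.smul_apply, smul_eq_mul, zero_mul] at this ⊢
          linarith
        have hR1T : (u ⬝ᵥ c) • v = (s₁ * (φ₁ ⬝ᵥ c)) • ψ₁ - (s₂ * (φ₂ ⬝ᵥ c)) • ψ₂ := by
          rw [dotProduct_comm u c, dotProduct_comm φ₁ c, dotProduct_comm φ₂ c]
          exact hR1
        rcases aux v u ψ₁ ψ₂ φ₁ φ₂ c hs₁ hs₂ hET hrankT hR2' hR1T with ⟨h1, h2⟩ | ⟨h1, h2⟩
        · exact Or.inr (Or.inr (Or.inr ⟨h1, h2⟩))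
        · exact Or.inl ⟨h1, h2⟩
end

section
/- The matrix a₁ ⊗ n₁ - a₂ ⊗ n₂ has rank 2 if and only if a₁ × a₂ ≠ 0 and n₁ × n₂ ≠ 0, given that a₁ ⊗ n₁ - a₂ ⊗ n₂ ≠ 0. In particular, rank(a₁ ⊗ n₁ - a₂ ⊗ n₂) = 2 implies a₁ × a₂ ≠ 0 and n₁ × n₂ ≠ 0. -/
open Matrix

private lemma mulVec_sub_vecMulVec (a₁ a₂ n₁ n₂ x : Fin 3 → ℝ) :
    (vecMulVec a₁ n₁ - vecMulVec a₂ n₂) *ᵥ x = (n₁ ⬝ᵥ x) • a₁ - (n₂ ⬝ᵥ x) • a₂ := by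
  ext i
  simp [mulVec, vecMulVec_apply, dotProduct, Fin.sum_univ_three]
  ring

private lemma range_le_span (a₁ a₂ n₁ n₂ : Fin 3 → ℝ) :
    LinearMap.range (vecMulVec a₁ n₁ - vecMulVec a₂ n₂).mulVecLin ≤
      Submodule.span ℝ {a₁, a₂} := by
  rintro y ⟨x, rfl⟩
  rw [mulVecLin_apply, mulVec_sub_vecMulVec]
  exact sub_mem
    (Submodule.smul_mem _ _ (Submodule.subset_span (by simp)))
    (Submodule.smul_mem _ _ (Submodule.subset_span (by simp)))

private lemma rank_le_one_of_dep (a₁ a₂ n₁ n₂ : Fin 3 → ℝ)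
    (hdep : ¬ LinearIndependent ℝ ![a₁, a₂]) :
    (vecMulVec a₁ n₁ - vecMulVec a₂ n₂).rank ≤ 1 := by
  have hspan : Module.finrank ℝ (Submodule.span ℝ ({a₁, a₂} : Set (Fin 3 → ℝ))) ≤ 1 := by
    rw [linearIndependent_fin2] at hdep
    push_neg at hdep
    simp only [Matrix.cons_val_one, Matrix.head_cons, Matrix.cons_val_zero] at hdep
    rcases eq_or_ne a₂ 0 with h2 | h2
    · have : Submodule.span ℝ ({a₁, a₂} : Set (Fin 3 → ℝ)) ≤ Submodule.span ℝ {a₁} := by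
        rw [Submodule.span_le]
        rintro z (rfl | rfl)
        · exact Submodule.subset_span rfl
        · simp [h2]
      refine le_trans (Submodule.finrank_mono this) ?_
      simpa using finrank_span_le_card ({a₁} : Set (Fin 3 → ℝ))
    · obtain ⟨c, hc⟩ := hdep h2
      have : Submodule.span ℝ ({a₁, a₂} : Set (Fin 3 → ℝ)) ≤ Submodule.span ℝ {a₂} := by
        rw [Submodule.span_le]
        rintro z (rfl | rfl)
        · rw [← hc]
          exact Submodule.smul_mem _ _ (Submodule.subset_span rfl)
        · exact Submodule.subset_span rfl
      refine le_trans (Submodule.finrank_mono this) ?_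
      simpa using finrank_span_le_card ({a₂} : Set (Fin 3 → ℝ))
  exact le_trans (Submodule.finrank_mono (range_le_span a₁ a₂ n₁ n₂)) hspan

private lemma rank_eq_two_of_indep (a₁ a₂ n₁ n₂ : Fin 3 → ℝ)
    (hA : LinearIndependent ℝ ![a₁, a₂]) (hN : LinearIndependent ℝ ![n₁, n₂]) :
    (vecMulVec a₁ n₁ - vecMulVec a₂ n₂).rank = 2 := by
  have hcN : crossProduct n₁ n₂ ≠ 0 := crossProduct_ne_zero_iff_linearIndependent.mpr hN
  set w := crossProduct n₁ n₂ with hw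
  have hc : w ⬝ᵥ w ≠ 0 := fun h => hcN (dotProduct_self_eq_zero.mp h)
  have hrange : LinearMap.range (vecMulVec a₁ n₁ - vecMulVec a₂ n₂).mulVecLin =
      Submodule.span ℝ {a₁, a₂} := by
    refine le_antisymm (range_le_span a₁ a₂ n₁ n₂) ?_
    rw [Submodule.span_le]
    rintro z (rfl | rfl)
    · -- a₁ ∈ range, witness x = n₂ ×₃ w
      refine ⟨(w ⬝ᵥ w)⁻¹ • (crossProduct n₂ w), ?_⟩
      rw [_root_.map_smul, mulVecLin_apply, mulVec_sub_vecMulVec]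
      have h1 : n₁ ⬝ᵥ (crossProduct n₂ w) = w ⬝ᵥ w := by
        rw [triple_product_permutation, triple_product_permutation, ← hw]
      have h2 : n₂ ⬝ᵥ (crossProduct n₂ w) = 0 := dot_self_cross n₂ w
      rw [h1, h2, zero_smul, sub_zero, smul_smul, inv_mul_cancel₀ hc, one_smul]
    · -- a₂ ∈ range, witness x = n₁ ×₃ w, with n₂ ⬝ x = - w ⬝ w
      refine ⟨(w ⬝ᵥ w)⁻¹ • (crossProduct n₁ w), ?_⟩
      rw [_root_.map_smul, mulVecLin_apply, mulVec_sub_vecMulVec]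
      have h1 : n₁ ⬝ᵥ (crossProduct n₁ w) = 0 := dot_self_cross n₁ w
      have h2 : n₂ ⬝ᵥ (crossProduct n₁ w) = -(w ⬝ᵥ w) := by
        rw [triple_product_permutation, triple_product_permutation,
          ← cross_anticomm n₁ n₂, ← hw]
        simp
      rw [h1, h2, zero_smul, zero_sub, neg_smul, neg_neg, smul_smul,
        inv_mul_cancel₀ hc, one_smul]
  rw [Matrix.rank, hrange]
  have : ({a₁, a₂} : Set (Fin 3 → ℝ)) = Set.range ![a₁, a₂] := by
    ext z
    simp [Matrix.range_cons, Matrix.range_empty]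
    tauto
  rw [this, finrank_span_eq_card hA]
  simp

/-- Given that `a₁ ⊗ n₁ - a₂ ⊗ n₂ ≠ 0`, it has rank 2 iff `a₁ × a₂ ≠ 0` and
`n₁ × n₂ ≠ 0`. In particular rank 2 implies both cross products are nonzero. -/
theorem rank_two_iff_cross_products_ne_zero (a₁ a₂ n₁ n₂ : Fin 3 → ℝ)
    (h : vecMulVec a₁ n₁ - vecMulVec a₂ n₂ ≠ 0) :
    ((vecMulVec a₁ n₁ - vecMulVec a₂ n₂).rank = 2 ↔
      crossProduct a₁ a₂ ≠ 0 ∧ crossProduct n₁ n₂ ≠ 0) ∧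
    ((vecMulVec a₁ n₁ - vecMulVec a₂ n₂).rank = 2 →
      crossProduct a₁ a₂ ≠ 0 ∧ crossProduct n₁ n₂ ≠ 0) := by
  have key : (vecMulVec a₁ n₁ - vecMulVec a₂ n₂).rank = 2 ↔
      crossProduct a₁ a₂ ≠ 0 ∧ crossProduct n₁ n₂ ≠ 0 := by
    constructor
    · intro h2
      constructor
      · intro hc
        have hdep : ¬ LinearIndependent ℝ ![a₁, a₂] := fun hli =>
          (crossProduct_ne_zero_iff_linearIndependent.mpr hli) hc
        have := rank_le_one_of_dep a₁ a₂ n₁ n₂ hdep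
        omega
      · intro hc
        have hdep : ¬ LinearIndependent ℝ ![n₁, n₂] := fun hli =>
          (crossProduct_ne_zero_iff_linearIndependent.mpr hli) hc
        have h1 : (vecMulVec n₁ a₁ - vecMulVec n₂ a₂).rank ≤ 1 :=
          rank_le_one_of_dep n₁ n₂ a₁ a₂ hdep
        have ht : (vecMulVec a₁ n₁ - vecMulVec a₂ n₂)ᵀ =
            vecMulVec n₁ a₁ - vecMulVec n₂ a₂ := by
          ext i j
          simp [vecMulVec_apply, mul_comm]
        have := Matrix.rank_transpose (vecMulVec a₁ n₁ - vecMulVec a₂ n₂)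
        rw [ht] at this
        omega
    · rintro ⟨hA, hN⟩
      exact rank_eq_two_of_indep a₁ a₂ n₁ n₂
        (crossProduct_ne_zero_iff_linearIndependent.mp hA)
        (crossProduct_ne_zero_iff_linearIndependent.mp hN)
  exact ⟨key, key.mp⟩
end

section
/- Let a₁, a₂, φ̂₁, φ̂₂, n₁, n₂ ∈ ℝ³ with rank(a₁ ⊗ n₁ - a₂ ⊗ n₂) = 2, and suppose ψ₁ = α₁n₁ + α₂n₂ and ψ₂ = β₁n₁ + β₂n₂ for scalars α₁, α₂, β₁, β₂. Assume (a₁ × a₂)·φ̂₁ ≠ 0 or (a₁ × a₂)·φ̂₂ ≠ 0. Then s₁, s₂ ∈ ℝ satisfy rank(a₁ ⊗ n₁ - a₂ ⊗ n₂ + s₁ φ̂₁ ⊗ ψ₁ - s₂ φ̂₂ ⊗ ψ₂) ≤ 1 if and only if (a₁ × a₂)·φ̂₂ = s₁ (α₂a₁ + α₁a₂)·(φ̂₁ × φ̂₂) and (a₁ × a₂)·φ̂₁ = s₂ (β₂a₁ + β₁a₂)·(φ̂₁ × φ̂₂). -/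
open Matrix

lemma dep_of_cross_zero (A B : Fin 3 → ℝ) (h : crossProduct A B = 0) :
    A = 0 ∨ ∃ c : ℝ, B = c • A := by
  have h0 := congrFun h 0
  have h1 := congrFun h 1
  have h2 := congrFun h 2
  simp [cross_apply, sub_eq_zero] at h0 h1 h2
  by_cases hA : A = 0
  · exact Or.inl hA
  · right
    have : A 0 ≠ 0 ∨ A 1 ≠ 0 ∨ A 2 ≠ 0 := by
      by_contra hc
      push_neg at hc
      exact hA (funext fun i => by fin_cases i <;> simp [hc.1, hc.2.1, hc.2.2])
    rcases this with hi | hi | hi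
    · exact ⟨B 0 / A 0, funext fun j => by
        fin_cases j <;> simp <;> field_simp
        · linear_combination h2
        · linear_combination -h1⟩
    · exact ⟨B 1 / A 1, funext fun j => by
        fin_cases j <;> simp <;> field_simp
        · linear_combination -h2
        · linear_combination h0⟩
    · exact ⟨B 2 / A 2, funext fun j => by
        fin_cases j <;> simp <;> field_simp
        · linear_combination h1
        · linear_combination -h0⟩

lemma mulVec_vecMulVec' (v w y : Fin 3 → ℝ) :
    (vecMulVec v w).mulVec y = (w ⬝ᵥ y) • v := by
  funext i
  simp only [mulVec, vecMulVec_apply, dotProduct, Pi.smul_apply, smul_eq_mul,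
    Finset.sum_mul, Finset.mul_sum]
  exact Finset.sum_congr rfl fun j _ => by ring

lemma rank_vecMulVec_le (v w : Fin 3 → ℝ) : (vecMulVec v w).rank ≤ 1 := by
  have hle : LinearMap.range (vecMulVec v w).mulVecLin ≤ Submodule.span ℝ {v} := by
    rintro x ⟨y, rfl⟩
    rw [mulVecLin_apply, mulVec_vecMulVec']
    exact Submodule.smul_mem _ _ (Submodule.mem_span_singleton_self v)
  calc (vecMulVec v w).rank ≤ Module.finrank ℝ (Submodule.span ℝ ({v} : Set (Fin 3 → ℝ))) :=
        Submodule.finrank_mono hle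
    _ ≤ 1 := by simpa using finrank_span_le_card ({v} : Set (Fin 3 → ℝ))

lemma rank_sum_le (A B n m : Fin 3 → ℝ) (h : A = 0 ∨ ∃ c : ℝ, B = c • A) :
    (vecMulVec A n + vecMulVec B m).rank ≤ 1 := by
  rcases h with h | ⟨c, h⟩
  · have heq : vecMulVec A n + vecMulVec B m = vecMulVec B m := by
      subst h; ext i j; simp [vecMulVec_apply]
    rw [heq]; exact _root_.rank_vecMulVec_le _ _
  · have heq : vecMulVec A n + vecMulVec B m = vecMulVec A (n + c • m) := by
      subst h; ext i j; simp [vecMulVec_apply]; ring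
    rw [heq]; exact _root_.rank_vecMulVec_le _ _

lemma rank_sum_le' (A B n m : Fin 3 → ℝ) (h : n = 0 ∨ ∃ c : ℝ, m = c • n) :
    (vecMulVec A n + vecMulVec B m).rank ≤ 1 := by
  rcases h with h | ⟨c, h⟩
  · have heq : vecMulVec A n + vecMulVec B m = vecMulVec B m := by
      subst h; ext i j; simp [vecMulVec_apply]
    rw [heq]; exact _root_.rank_vecMulVec_le _ _
  · have heq : vecMulVec A n + vecMulVec B m = vecMulVec (A + c • B) n := by
      subst h; ext i j; simp [vecMulVec_apply]; ring
    rw [heq]; exact _root_.rank_vecMulVec_le _ _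

lemma cross_zero_of_rank_le_one (A B n₁ n₂ : Fin 3 → ℝ)
    (hr : (vecMulVec A n₁ + vecMulVec B n₂).rank ≤ 1)
    (hn : crossProduct n₁ n₂ ≠ 0) : crossProduct A B = 0 := by
  set M := vecMulVec A n₁ + vecMulVec B n₂ with hM
  have hfin : Module.finrank ℝ (LinearMap.range M.mulVecLin) ≤ 1 := hr
  obtain ⟨v₀, hv₀⟩ := finrank_le_one_iff.mp hfin
  have hcol : ∀ j : Fin 3, ∃ r : ℝ, M.mulVec (Pi.single j 1) = r • (v₀ : Fin 3 → ℝ) := by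
    intro j
    obtain ⟨r, hr'⟩ := hv₀ ⟨M.mulVec (Pi.single j 1), ⟨Pi.single j 1, rfl⟩⟩
    exact ⟨r, by simpa using congrArg Subtype.val hr'.symm⟩
  have hcolval : ∀ j : Fin 3, M.mulVec (Pi.single j 1) = n₁ j • A + n₂ j • B := by
    intro j
    funext i
    simp [hM, mulVec, vecMulVec_apply, dotProduct, add_mul, Pi.single_apply,
      Finset.sum_add_distrib, mul_ite, Finset.sum_ite_eq', mul_comm]
  have hcross : ∀ j k : Fin 3,
      crossProduct (n₁ j • A + n₂ j • B) (n₁ k • A + n₂ k • B) = 0 := by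
    intro j k
    obtain ⟨r, hjr⟩ := hcol j
    obtain ⟨s, hks⟩ := hcol k
    rw [← hcolval j, ← hcolval k, hjr, hks]
    simp [smul_smul, mul_comm]
  have combo : ∀ (p q r s : ℝ), crossProduct (p • A + q • B) (r • A + s • B)
      = (p * s - q * r) • crossProduct A B := by
    intro p q r s
    funext i
    fin_cases i <;> simp [cross_apply] <;> ring
  have key : ∀ j k : Fin 3, (n₁ j * n₂ k - n₁ k * n₂ j) • crossProduct A B = 0 := by
    intro j k
    have h := combo (n₁ j) (n₂ j) (n₁ k) (n₂ k)
    rw [hcross j k] at h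
    rw [show n₁ j * n₂ k - n₁ k * n₂ j = n₁ j * n₂ k - n₂ j * n₁ k from by ring, ← h]
  have : ∃ j k : Fin 3, n₁ j * n₂ k - n₁ k * n₂ j ≠ 0 := by
    by_contra hc
    push_neg at hc
    apply hn
    funext i
    fin_cases i <;> simp [cross_apply, sub_eq_zero] <;>
      [exact sub_eq_zero.mp (hc 1 2); exact sub_eq_zero.mp (hc 2 0); exact sub_eq_zero.mp (hc 0 1)]
  obtain ⟨j, k, hjk⟩ := this
  exact (smul_eq_zero.mp (key j k)).resolve_left hjk

lemma cofactor_identity (a b c w : Fin 3 → ℝ) :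
    (crossProduct a b ⬝ᵥ c) • w
      = (w ⬝ᵥ a) • crossProduct b c + (w ⬝ᵥ b) • crossProduct c a
        + (w ⬝ᵥ c) • crossProduct a b := by
  funext i
  fin_cases i <;> simp [cross_apply, dotProduct, Fin.sum_univ_three] <;> ring

lemma ident_phi2 (a₁ a₂ φ₁ φ₂ : Fin 3 → ℝ) (s₁ s₂ α₁ α₂ β₁ β₂ : ℝ) :
    crossProduct (a₁ + (s₁ * α₁) • φ₁ - (s₂ * β₁) • φ₂)
        (-a₂ + (s₁ * α₂) • φ₁ - (s₂ * β₂) • φ₂) ⬝ᵥ φ₂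
      = s₁ * ((α₂ • a₁ + α₁ • a₂) ⬝ᵥ crossProduct φ₁ φ₂)
        - crossProduct a₁ a₂ ⬝ᵥ φ₂ := by
  simp [cross_apply, dotProduct, Fin.sum_univ_three]
  ring

lemma ident_phi1 (a₁ a₂ φ₁ φ₂ : Fin 3 → ℝ) (s₁ s₂ α₁ α₂ β₁ β₂ : ℝ) :
    crossProduct (a₁ + (s₁ * α₁) • φ₁ - (s₂ * β₁) • φ₂)
        (-a₂ + (s₁ * α₂) • φ₁ - (s₂ * β₂) • φ₂) ⬝ᵥ φ₁
      = s₂ * ((β₂ • a₁ + β₁ • a₂) ⬝ᵥ crossProduct φ₁ φ₂)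
        - crossProduct a₁ a₂ ⬝ᵥ φ₁ := by
  simp [cross_apply, dotProduct, Fin.sum_univ_three]
  ring

/-- Proposition 4.2, first case: characterisation of the shear amounts `s₁, s₂`
achieving rank-one compatibility when both slip-plane normals lie in the span
of `n₁, n₂`. -/
theorem shear_amounts_characterisation
    (a₁ a₂ φ₁ φ₂ n₁ n₂ ψ₁ ψ₂ : Fin 3 → ℝ) (α₁ α₂ β₁ β₂ : ℝ)
    (hrank : (vecMulVec a₁ n₁ - vecMulVec a₂ n₂).rank = 2)
    (hψ₁ : ψ₁ = α₁ • n₁ + α₂ • n₂) (hψ₂ : ψ₂ = β₁ • n₁ + β₂ • n₂)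
    (hφ : crossProduct a₁ a₂ ⬝ᵥ φ₁ ≠ 0 ∨ crossProduct a₁ a₂ ⬝ᵥ φ₂ ≠ 0)
    (s₁ s₂ : ℝ) :
    (vecMulVec a₁ n₁ - vecMulVec a₂ n₂
        + s₁ • vecMulVec φ₁ ψ₁ - s₂ • vecMulVec φ₂ ψ₂).rank ≤ 1 ↔
    (crossProduct a₁ a₂ ⬝ᵥ φ₂ = s₁ * ((α₂ • a₁ + α₁ • a₂) ⬝ᵥ crossProduct φ₁ φ₂) ∧
     crossProduct a₁ a₂ ⬝ᵥ φ₁ = s₂ * ((β₂ • a₁ + β₁ • a₂) ⬝ᵥ crossProduct φ₁ φ₂)) := by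
  set A : Fin 3 → ℝ := a₁ + (s₁ * α₁) • φ₁ - (s₂ * β₁) • φ₂ with hA
  set B : Fin 3 → ℝ := -a₂ + (s₁ * α₂) • φ₁ - (s₂ * β₂) • φ₂ with hB
  have hMeq : vecMulVec a₁ n₁ - vecMulVec a₂ n₂
      + s₁ • vecMulVec φ₁ ψ₁ - s₂ • vecMulVec φ₂ ψ₂
      = vecMulVec A n₁ + vecMulVec B n₂ := by
    subst hψ₁ hψ₂
    ext i j
    simp [vecMulVec_apply, hA, hB]
    ring
  have hn : crossProduct n₁ n₂ ≠ 0 := by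
    intro hn0
    have hle : (vecMulVec a₁ n₁ - vecMulVec a₂ n₂).rank ≤ 1 := by
      have heq : vecMulVec a₁ n₁ - vecMulVec a₂ n₂
          = vecMulVec a₁ n₁ + vecMulVec (-a₂) n₂ := by
        ext i j; simp [vecMulVec_apply]; ring
      rw [heq]
      exact rank_sum_le' _ _ _ _ (dep_of_cross_zero n₁ n₂ hn0)
    omega
  rw [hMeq]
  constructor
  · intro hr
    have hc : crossProduct A B = 0 := cross_zero_of_rank_le_one A B n₁ n₂ hr hn
    have h2 := ident_phi2 a₁ a₂ φ₁ φ₂ s₁ s₂ α₁ α₂ β₁ β₂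
    have h1 := ident_phi1 a₁ a₂ φ₁ φ₂ s₁ s₂ α₁ α₂ β₁ β₂
    rw [← hA, ← hB, hc] at h1 h2
    simp only [zero_dotProduct] at h1 h2
    constructor
    · linear_combination h2
    · linear_combination h1
  · rintro ⟨hE1, hE2⟩
    set w : Fin 3 → ℝ := crossProduct A B with hw
    have hwφ2 : w ⬝ᵥ φ₂ = 0 := by
      have h2 := ident_phi2 a₁ a₂ φ₁ φ₂ s₁ s₂ α₁ α₂ β₁ β₂
      rw [← hA, ← hB, ← hw] at h2
      linear_combination h2 - hE1
    have hwφ1 : w ⬝ᵥ φ₁ = 0 := by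
      have h1 := ident_phi1 a₁ a₂ φ₁ φ₂ s₁ s₂ α₁ α₂ β₁ β₂
      rw [← hA, ← hB, ← hw] at h1
      linear_combination h1 - hE2
    have hwA : w ⬝ᵥ A = 0 := by
      rw [hw, dotProduct_comm]; exact dot_self_cross A B
    have hwB : w ⬝ᵥ B = 0 := by
      rw [hw, dotProduct_comm]; exact dot_cross_self A B
    have hwa₁ : w ⬝ᵥ a₁ = 0 := by
      have : w ⬝ᵥ A = w ⬝ᵥ a₁ + (s₁ * α₁) * (w ⬝ᵥ φ₁) - (s₂ * β₁) * (w ⬝ᵥ φ₂) := by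
        rw [hA]
        simp [dotProduct_add, dotProduct_sub, dotProduct_smul, smul_eq_mul]
      rw [this, hwφ1, hwφ2] at hwA
      linarith
    have hwa₂ : w ⬝ᵥ a₂ = 0 := by
      have : w ⬝ᵥ B = -(w ⬝ᵥ a₂) + (s₁ * α₂) * (w ⬝ᵥ φ₁) - (s₂ * β₂) * (w ⬝ᵥ φ₂) := by
        rw [hB]
        simp [dotProduct_add, dotProduct_sub, dotProduct_smul, smul_eq_mul]
      rw [this, hwφ1, hwφ2] at hwB
      linarith
    have hwzero : w = 0 := by
      rcases hφ with hφ | hφ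
      · have := cofactor_identity a₁ a₂ φ₁ w
        rw [hwa₁, hwa₂, hwφ1] at this
        simp only [zero_smul, add_zero, zero_add] at this
        exact (smul_eq_zero.mp this).resolve_left hφ
      · have := cofactor_identity a₁ a₂ φ₂ w
        rw [hwa₁, hwa₂, hwφ2] at this
        simp only [zero_smul, add_zero, zero_add] at this
        exact (smul_eq_zero.mp this).resolve_left hφ
    exact rank_sum_le A B n₁ n₂ (dep_of_cross_zero A B hwzero)
end

section
/- Let η₁, η₂ > 0 with η₁ ≠ η₂, let U₁ = diag(η₁, η₂, η₃) and U₂ = diag(η₂, η₁, η₃) for some η₃ > 0, let e₁, e₂ be the first two standard basis vectors, and set b₁ = (√2(η₁−η₂)/(η₁+η₂))(−η₁e₁ + η₂e₂), m₁ = (e₁+e₂)/√2, b₂ = (√(η₁²+η₂²)(η₁−η₂)/(η₁+η₂))(e₁+e₂), m₂ = (η₂e₁ − η₁e₂)/√(η₁²+η₂²). Then U₁ + b₁ ⊗ m₁ − U₂ = b₂ ⊗ m₂. -/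
open Matrix

/-- The rank-one identity `U₁ + b₁ ⊗ m₁ − U₂ = b₂ ⊗ m₂` from Remark 3.6. -/
theorem remark_counterexample_identity (η₁ η₂ η₃ : ℝ)
    (h₁ : 0 < η₁) (h₂ : 0 < η₂) (h₃ : 0 < η₃) (hne : η₁ ≠ η₂)
    (U₁ U₂ : Matrix (Fin 3) (Fin 3) ℝ)
    (hU₁ : U₁ = Matrix.diagonal ![η₁, η₂, η₃])
    (hU₂ : U₂ = Matrix.diagonal ![η₂, η₁, η₃])
    (e₁ e₂ : Fin 3 → ℝ) (he₁ : e₁ = ![1, 0, 0]) (he₂ : e₂ = ![0, 1, 0])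
    (b₁ m₁ b₂ m₂ : Fin 3 → ℝ)
    (hb₁ : b₁ = (Real.sqrt 2 * (η₁ - η₂) / (η₁ + η₂)) • (-η₁ • e₁ + η₂ • e₂))
    (hm₁ : m₁ = (Real.sqrt 2)⁻¹ • (e₁ + e₂))
    (hb₂ : b₂ = (Real.sqrt (η₁ ^ 2 + η₂ ^ 2) * (η₁ - η₂) / (η₁ + η₂)) • (e₁ + e₂))
    (hm₂ : m₂ = (Real.sqrt (η₁ ^ 2 + η₂ ^ 2))⁻¹ • (η₂ • e₁ - η₁ • e₂)) :
    U₁ + vecMulVec b₁ m₁ - U₂ = vecMulVec b₂ m₂ := by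
  have hsum : η₁ + η₂ ≠ 0 := by positivity
  have hs2 : Real.sqrt 2 * (Real.sqrt 2)⁻¹ = 1 := by
    rw [mul_inv_cancel₀ (by positivity)]
  have hspos : (0:ℝ) < η₁ ^ 2 + η₂ ^ 2 := by positivity
  have hss : Real.sqrt (η₁ ^ 2 + η₂ ^ 2) * (Real.sqrt (η₁ ^ 2 + η₂ ^ 2))⁻¹ = 1 := by
    rw [mul_inv_cancel₀ (Real.sqrt_pos.mpr hspos).ne']
  subst hU₁ hU₂ he₁ he₂ hb₁ hm₁ hb₂ hm₂
  ext i j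
  fin_cases i <;> fin_cases j <;>
    simp [vecMulVec_apply, Matrix.diagonal] <;>
    field_simp <;>
    nlinarith [hs2, hss, Real.sq_sqrt hspos.le, Real.sq_sqrt (by norm_num : (0:ℝ) ≤ 2),
      sq_nonneg (η₁ + η₂), mul_pos h₁ h₂]
end

section
/- With U₁, b₁, m₁ as in the previous context (U₁ = diag(η₁,η₂,η₃), b₁ = (√2(η₁−η₂)/(η₁+η₂))(−η₁e₁+η₂e₂), m₁ = (e₁+e₂)/√2), the matrix B = U₁ + b₁ ⊗ m₁ satisfies det B = det U₁ and |B(e₁ ± e₂)|² ≤ η₁² + η₂² for all η₁, η₂ > 0. -/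
open Matrix

/-- The matrix `B = U₁ + b₁ ⊗ m₁` of Remark 3.6 satisfies Dolzmann's conditions:
`det B = det U₁` and `|B(e₁ ± e₂)|² ≤ η₁² + η₂²` for all `η₁, η₂ > 0`. -/
theorem dolzmann_conditions (η₁ η₂ η₃ : ℝ)
    (h₁ : 0 < η₁) (h₂ : 0 < η₂) (h₃ : 0 < η₃)
    (U₁ : Matrix (Fin 3) (Fin 3) ℝ) (hU₁ : U₁ = Matrix.diagonal ![η₁, η₂, η₃])
    (e₁ e₂ : Fin 3 → ℝ) (he₁ : e₁ = ![1, 0, 0]) (he₂ : e₂ = ![0, 1, 0])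
    (b₁ m₁ : Fin 3 → ℝ)
    (hb₁ : b₁ = (Real.sqrt 2 * (η₁ - η₂) / (η₁ + η₂)) • (-η₁ • e₁ + η₂ • e₂))
    (hm₁ : m₁ = (Real.sqrt 2)⁻¹ • (e₁ + e₂))
    (B : Matrix (Fin 3) (Fin 3) ℝ) (hB : B = U₁ + vecMulVec b₁ m₁) :
    B.det = U₁.det ∧
    (B *ᵥ (e₁ + e₂)) ⬝ᵥ (B *ᵥ (e₁ + e₂)) ≤ η₁ ^ 2 + η₂ ^ 2 ∧
    (B *ᵥ (e₁ - e₂)) ⬝ᵥ (B *ᵥ (e₁ - e₂)) ≤ η₁ ^ 2 + η₂ ^ 2 := by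
  subst hU₁ he₁ he₂ hb₁ hm₁ hB
  have hs : Real.sqrt 2 ^ 2 = 2 := Real.sq_sqrt (by norm_num)
  have hs0 : (0:ℝ) < Real.sqrt 2 := Real.sqrt_pos.2 (by norm_num)
  have h12 : (0:ℝ) < η₁ + η₂ := by linarith
  set s := Real.sqrt 2
  have hsne : Real.sqrt 2 ≠ 0 := ne_of_gt hs0
  refine ⟨?_, ?_, ?_⟩
  · simp [Matrix.det_fin_three, Matrix.mulVec, dotProduct, Fin.sum_univ_three,
      Matrix.vecMulVec_apply, Matrix.diagonal, Matrix.of_apply]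
    field_simp
    ring_nf
  · simp [Matrix.mulVec, dotProduct, Fin.sum_univ_three,
      Matrix.vecMulVec_apply, Matrix.diagonal, Matrix.of_apply]
    field_simp
    nlinarith [hs, mul_nonneg (mul_pos h₁ h₂).le (sq_nonneg (η₁-η₂))]
  · simp [Matrix.mulVec, dotProduct, Fin.sum_univ_three,
      Matrix.vecMulVec_apply, Matrix.diagonal, Matrix.of_apply]
    nlinarith
end

section
/- Let R₁V₁, R₂V₂ ∈ ℝ^{3×3} with rank(R₁V₁ − R₂V₂) = 2 and cof(R₁V₁ − R₂V₂) = b̂ ⊗ m̂ with b̂ ≠ 0, m̂ ∈ S². Suppose t̄₁, t̄₂ ∈ ℝ, φ₁, ψ₁, φ₂, ψ₂ ∈ ℝ³ with φᵢ·ψᵢ = 0, and Fᵢ(s) = RᵢVᵢ(1 + s φᵢ⊗ψᵢ) satisfy F₁(t̄₁) − F₂(t̄₂) = b̄ ⊗ m for some b̄ ∈ ℝ³, m ∈ S² with m̂·m = m̂·ψ₁ = m̂·ψ₂ = 0. Then for any R ∈ SO(3) and any t₁, t₂ such that R F₁(t₁) − F₂(t₂) = b ⊗ m for some b ∈ ℝ³,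 the rotation axis of R must be parallel to R₁V₁m̂ (i.e., R(R₁V₁m̂) = R₁V₁m̂). -/
open Matrix

lemma vecMulVec_mulVec_aux (a b x : Fin 3 → ℝ) :
    vecMulVec a b *ᵥ x = (b ⬝ᵥ x) • a := by
  ext i
  simp [vecMulVec, mulVec, dotProduct, Finset.mul_sum, Pi.smul_apply, smul_eq_mul,
    mul_comm, mul_left_comm]

/-- First step in the proof of Proposition 4.3: any rotation `R` realizing a
rank-one connection `R F₁(t₁) − F₂(t₂) = b ⊗ m` must fix the vector
`R₁V₁ m̂`, i.e. its rotation axis is parallel to `R₁V₁ m̂`. -/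
theorem rotation_axis_forced
    (R₁V₁ R₂V₂ : Matrix (Fin 3) (Fin 3) ℝ)
    (hrank : (R₁V₁ - R₂V₂).rank = 2)
    (bhat mhat : Fin 3 → ℝ) (hbhat : bhat ≠ 0) (hmhat : mhat ⬝ᵥ mhat = 1)
    (hcof : (Matrix.adjugate (R₁V₁ - R₂V₂))ᵀ = vecMulVec bhat mhat)
    (tb₁ tb₂ : ℝ) (φ₁ ψ₁ φ₂ ψ₂ : Fin 3 → ℝ)
    (hor₁ : φ₁ ⬝ᵥ ψ₁ = 0) (hor₂ : φ₂ ⬝ᵥ ψ₂ = 0)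
    (bb m : Fin 3 → ℝ) (hm : m ⬝ᵥ m = 1)
    (hmm : mhat ⬝ᵥ m = 0) (hmψ₁ : mhat ⬝ᵥ ψ₁ = 0) (hmψ₂ : mhat ⬝ᵥ ψ₂ = 0)
    (hjunction : R₁V₁ * (1 + tb₁ • vecMulVec φ₁ ψ₁)
        - R₂V₂ * (1 + tb₂ • vecMulVec φ₂ ψ₂) = vecMulVec bb m)
    (R : Matrix (Fin 3) (Fin 3) ℝ) (hR : Rᵀ * R = 1) (hdetR : R.det = 1)
    (t₁ t₂ : ℝ) (b : Fin 3 → ℝ)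
    (hconn : R * (R₁V₁ * (1 + t₁ • vecMulVec φ₁ ψ₁))
        - R₂V₂ * (1 + t₂ • vecMulVec φ₂ ψ₂) = vecMulVec b m) :
    R *ᵥ (R₁V₁ *ᵥ mhat) = R₁V₁ *ᵥ mhat := by
  have hψ₁ : ψ₁ ⬝ᵥ mhat = 0 := by rwa [dotProduct_comm] at hmψ₁
  have hψ₂ : ψ₂ ⬝ᵥ mhat = 0 := by rwa [dotProduct_comm] at hmψ₂
  have hmm' : m ⬝ᵥ mhat = 0 := by rwa [dotProduct_comm] at hmm
  have e₁ : ∀ t : ℝ, (1 + t • vecMulVec φ₁ ψ₁) *ᵥ mhat = mhat := by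
    intro t
    rw [add_mulVec, Matrix.smul_mulVec, vecMulVec_mulVec_aux, hψ₁]
    simp
  have e₂ : ∀ t : ℝ, (1 + t • vecMulVec φ₂ ψ₂) *ᵥ mhat = mhat := by
    intro t
    rw [add_mulVec, Matrix.smul_mulVec, vecMulVec_mulVec_aux, hψ₂]
    simp
  have hj := congrArg (fun M => M *ᵥ mhat) hjunction
  simp only [sub_mulVec, ← Matrix.mulVec_mulVec, e₁, e₂,
    vecMulVec_mulVec_aux, hmm', zero_smul] at hj
  have hc := congrArg (fun M => M *ᵥ mhat) hconn
  simp only [sub_mulVec, ← Matrix.mulVec_mulVec, e₁, e₂,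
    vecMulVec_mulVec_aux, hmm', zero_smul] at hc
  rw [sub_eq_zero.mp hc, ← sub_eq_zero.mp hj]
end

section
/- Let λ ∈ (1, √2), d = 1/λ, α = d(λ²−1)/(2(d+λ)), β = −√(2(1−d²))/√(λ²−1), γ = −(λ/d)√(2(1−d²))/√(λ²−1), a₁⁺ = α(−γ, 1, 1), n₁⁺ = (β, 1, 1), and U₁ the matrix with rows (d,0,0), (0,(1+λ)/2,(λ−1)/2), (0,(λ−1)/2,(1+λ)/2). Then there exists R ∈ SO(3) such that R U₁ = 1 + a₁⁺ ⊗ n₁⁺. -/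
open Matrix

set_option maxHeartbeats 1000000 in
/-- The cubic-to-orthorhombic stretch tensor `U₁` with `d = 1/λ` is rank-one
connected to the identity: `R U₁ = 1 + a₁⁺ ⊗ n₁⁺` for some rotation `R`. -/
theorem austenite_martensite_rank_one
    (lam : ℝ) (hlam : lam ∈ Set.Ioo 1 (Real.sqrt 2))
    (d α β γ : ℝ)
    (hd : d = 1 / lam)
    (hα : α = d * (lam ^ 2 - 1) / (2 * (d + lam)))
    (hβ : β = -Real.sqrt (2 * (1 - d ^ 2)) / Real.sqrt (lam ^ 2 - 1))
    (hγ : γ = -(lam / d) * Real.sqrt (2 * (1 - d ^ 2)) / Real.sqrt (lam ^ 2 - 1))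
    (a n : Fin 3 → ℝ) (ha : a = α • ![-γ, 1, 1]) (hn : n = ![β, 1, 1])
    (U₁ : Matrix (Fin 3) (Fin 3) ℝ)
    (hU₁ : U₁ = !![d, 0, 0;
                   0, (1 + lam) / 2, (lam - 1) / 2;
                   0, (lam - 1) / 2, (1 + lam) / 2]) :
    ∃ R : Matrix (Fin 3) (Fin 3) ℝ,
      Rᵀ * R = 1 ∧ R.det = 1 ∧ R * U₁ = 1 + vecMulVec a n := by
  obtain ⟨h1, h2⟩ := hlam
  subst hd
  have hlam0 : (0:ℝ) < lam := by linarith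
  have hlamne : lam ≠ 0 := ne_of_gt hlam0
  have hp : lam ^ 2 + 1 ≠ 0 := by positivity
  have ht : (0:ℝ) < lam ^ 2 - 1 := by nlinarith
  set c := Real.sqrt 2 with hc
  have hc2 : c ^ 2 = 2 := Real.sq_sqrt (by norm_num)
  have hc0 : (0:ℝ) ≤ c := Real.sqrt_nonneg 2
  have hc3 : c ^ 3 = 2 * c := by rw [pow_succ, hc2]
  have hc4 : c ^ 4 = 4 := by rw [show (4:ℕ) = 2*2 from rfl, pow_mul, hc2]; norm_num
  have hstpos : (0:ℝ) < Real.sqrt (lam ^ 2 - 1) := Real.sqrt_pos.mpr ht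
  have hst : Real.sqrt (lam ^ 2 - 1) ≠ 0 := ne_of_gt hstpos
  have key : Real.sqrt (2 * (1 - (1/lam) ^ 2)) = c * Real.sqrt (lam ^ 2 - 1) / lam := by
    have h : 2 * (1 - (1/lam) ^ 2) = (c * Real.sqrt (lam ^ 2 - 1) / lam) ^ 2 := by
      conv_rhs => rw [div_pow, mul_pow, hc2, Real.sq_sqrt ht.le]
      field_simp
    rw [h, Real.sqrt_sq (by positivity)]
  have hβ' : β = -c / lam := by
    rw [hβ, key]; field_simp
  have hγ' : γ = -(c * lam) := by
    rw [hγ, key]; field_simp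
  have hα' : α = (lam ^ 2 - 1) / (2 * (lam ^ 2 + 1)) := by
    rw [hα]; field_simp; ring_nf
  refine ⟨!![2*lam/(lam^2+1), c*(lam^2-1)/(2*(lam^2+1)), c*(lam^2-1)/(2*(lam^2+1));
    -(c*(lam^2-1))/(2*(lam^2+1)), (lam+1)^2/(2*(lam^2+1)), -((lam-1)^2)/(2*(lam^2+1));
    -(c*(lam^2-1))/(2*(lam^2+1)), -((lam-1)^2)/(2*(lam^2+1)), (lam+1)^2/(2*(lam^2+1))],
    ?_, ?_, ?_⟩
  · have hT : (!![2*lam/(lam^2+1), c*(lam^2-1)/(2*(lam^2+1)), c*(lam^2-1)/(2*(lam^2+1));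
      -(c*(lam^2-1))/(2*(lam^2+1)), (lam+1)^2/(2*(lam^2+1)), -((lam-1)^2)/(2*(lam^2+1));
      -(c*(lam^2-1))/(2*(lam^2+1)), -((lam-1)^2)/(2*(lam^2+1)), (lam+1)^2/(2*(lam^2+1))])ᵀ
      = !![2*lam/(lam^2+1), -(c*(lam^2-1))/(2*(lam^2+1)), -(c*(lam^2-1))/(2*(lam^2+1));
      c*(lam^2-1)/(2*(lam^2+1)), (lam+1)^2/(2*(lam^2+1)), -((lam-1)^2)/(2*(lam^2+1));
      c*(lam^2-1)/(2*(lam^2+1)), -((lam-1)^2)/(2*(lam^2+1)), (lam+1)^2/(2*(lam^2+1))] := by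
      ext i j; fin_cases i <;> fin_cases j <;> rfl
    rw [hT, Matrix.mul_fin_three, Matrix.one_fin_three]
    ext i j
    fin_cases i <;> fin_cases j <;>
      simp [Matrix.vecHead, Matrix.vecTail]
    all_goals try rfl
    all_goals try field_simp
    all_goals try ring_nf
    all_goals try rfl
    all_goals try simp only [hc2, hc3, hc4]
    all_goals try ring
    all_goals try norm_num
  · rw [Matrix.det_fin_three]
    simp [Matrix.vecHead, Matrix.vecTail]
    field_simp
    ring_nf
    simp only [hc2, hc3, hc4]
    ring
  · subst hU₁
    have hvmv : vecMulVec a n = !![α*(c*lam)*(-c/lam), α*(c*lam), α*(c*lam);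
        α*(-c/lam), α, α; α*(-c/lam), α, α] := by
      subst ha hn
      ext i j; fin_cases i <;> fin_cases j <;>
        simp [vecMulVec_apply, hβ', hγ', Matrix.smul_cons, smul_eq_mul, Matrix.smul_empty,
          Matrix.vecHead, Matrix.vecTail] <;> ring
    rw [hvmv, Matrix.mul_fin_three, Matrix.one_fin_three, hα']
    ext i j
    fin_cases i <;> fin_cases j <;>
      simp [Matrix.add_apply, Matrix.vecHead, Matrix.vecTail]
    all_goals try rfl
    all_goals try field_simp
    all_goals try ring_nf
    all_goals try rfl
    all_goals try simp only [hc2, hc3, hc4]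
    all_goals try ring
    all_goals try norm_num
end

section
/- Let λ ∈ (1, √2), η₁ = (2λ⁴ + 5√2λ³ + 4λ² − 5√2λ − 6)/(2(2λ⁴ + 5√2λ³ − 4λ² + 3√2λ + 2)) and η₂ = (2λ⁴ + √2λ³ − 4λ² − √2λ + 2)/(2(2λ⁴ + 5√2λ³ − 4λ² + 3√2λ + 2)). With d = 1/λ and a₁⁺, n₁⁺, a₃⁺, n₃⁺ defined via α = d(λ²−1)/(2(d+λ)), β = −√(2(1−d²))/√(λ²−1), γ = −(λ/d)√(2(1−d²))/√(λ²−1) by a₁⁺ = α(−γ,1,1), n₁⁺ = (β,1,1), a₃⁺ = α(1,−γ,1), n₃⁺ = (1,β,1), set ψ = (−1,1,0), φ₁ = −(1,1,1), φ₂ = (1,1,−1). Then rank((1 + a₁⁺⊗n₁⁺)(1 + η₁ φ₁⊗ψ) − (1 + a₃⁺⊗n₃⁺)(1 + η₂ φ₂⊗ψ)) ≤ 1. -/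
open Matrix

set_option maxHeartbeats 1000000 in
/-- Case (a) of Theorem 6.1: the explicit shear amounts `η₁, η₂` on the slip
systems `(φ₁, ψ)`, `(φ₂, ψ)` produce a rank-one (plastic) junction between the
martensite plates `1 + a₁⁺ ⊗ n₁⁺` and `1 + a₃⁺ ⊗ n₃⁺`. -/
theorem plastic_junction_case_a
    (lam : ℝ) (hlam : lam ∈ Set.Ioo 1 (Real.sqrt 2))
    (d α β γ : ℝ)
    (hd : d = 1 / lam)
    (hα : α = d * (lam ^ 2 - 1) / (2 * (d + lam)))
    (hβ : β = -Real.sqrt (2 * (1 - d ^ 2)) / Real.sqrt (lam ^ 2 - 1))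
    (hγ : γ = -(lam / d) * Real.sqrt (2 * (1 - d ^ 2)) / Real.sqrt (lam ^ 2 - 1))
    (a₁ n₁ a₃ n₃ ψ φ₁ φ₂ : Fin 3 → ℝ)
    (ha₁ : a₁ = α • ![-γ, 1, 1]) (hn₁ : n₁ = ![β, 1, 1])
    (ha₃ : a₃ = α • ![1, -γ, 1]) (hn₃ : n₃ = ![1, β, 1])
    (hψ : ψ = ![-1, 1, 0]) (hφ₁ : φ₁ = -![1, 1, 1]) (hφ₂ : φ₂ = ![1, 1, -1])
    (η₁ η₂ : ℝ)
    (hη₁ : η₁ = (2 * lam ^ 4 + 5 * Real.sqrt 2 * lam ^ 3 + 4 * lam ^ 2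
        - 5 * Real.sqrt 2 * lam - 6)
      / (2 * (2 * lam ^ 4 + 5 * Real.sqrt 2 * lam ^ 3 - 4 * lam ^ 2
        + 3 * Real.sqrt 2 * lam + 2)))
    (hη₂ : η₂ = (2 * lam ^ 4 + Real.sqrt 2 * lam ^ 3 - 4 * lam ^ 2
        - Real.sqrt 2 * lam + 2)
      / (2 * (2 * lam ^ 4 + 5 * Real.sqrt 2 * lam ^ 3 - 4 * lam ^ 2
        + 3 * Real.sqrt 2 * lam + 2))) :
    ((1 + vecMulVec a₁ n₁) * (1 + η₁ • vecMulVec φ₁ ψ)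
      - (1 + vecMulVec a₃ n₃) * (1 + η₂ • vecMulVec φ₂ ψ)).rank ≤ 1 := by
  obtain ⟨hl1, hl2⟩ := hlam
  have hl0 : (0:ℝ) < lam := lt_trans one_pos hl1
  have ht2 : Real.sqrt 2 ^ 2 = 2 := Real.sq_sqrt (by norm_num)
  have ht0 : (0:ℝ) < Real.sqrt 2 := Real.sqrt_pos.mpr (by norm_num)
  have hlsq : lam ^ 2 < 2 := by nlinarith [Real.sqrt_nonneg 2]
  have hL : (0:ℝ) < lam ^ 2 - 1 := by nlinarith
  have hsL : Real.sqrt (lam ^ 2 - 1) ≠ 0 := by positivity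
  have hs1 : Real.sqrt (2 * (1 - d ^ 2)) = Real.sqrt 2 * Real.sqrt (lam ^ 2 - 1) / lam := by
    rw [show 2 * (1 - d ^ 2) = (Real.sqrt 2 * Real.sqrt (lam ^ 2 - 1) / lam) ^ 2 from ?_,
      Real.sqrt_sq (by positivity)]
    rw [div_pow, mul_pow, ht2, Real.sq_sqrt hL.le, hd]
    field_simp
  have hβ' : β = -Real.sqrt 2 / lam := by rw [hβ, hs1]; field_simp
  have hγ' : γ = -(Real.sqrt 2 * lam) := by
    rw [hγ, hs1, hd]; field_simp
  have hα' : α = (lam ^ 2 - 1) / (2 * (lam ^ 2 + 1)) := by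
    rw [hα, hd]; field_simp; ring_nf
    try exact Or.inl trivial
  have hDpos : (0:ℝ) < 2 * lam ^ 4 + 5 * Real.sqrt 2 * lam ^ 3 - 4 * lam ^ 2
      + 3 * Real.sqrt 2 * lam + 2 := by
    nlinarith [sq_nonneg (lam ^ 2 - 1), mul_pos ht0 (pow_pos hl0 3), mul_pos ht0 hl0]
  have hD : (2 * lam ^ 4 + 5 * Real.sqrt 2 * lam ^ 3 - 4 * lam ^ 2
      + 3 * Real.sqrt 2 * lam + 2) ≠ 0 := ne_of_gt hDpos
  have hl2p : (lam ^ 2 + 1) ≠ 0 := by positivity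
  have expand : ∀ (a n p q : Fin 3 → ℝ) (e : ℝ),
      (1 + vecMulVec a n) * (1 + e • vecMulVec p q)
        = 1 + vecMulVec a n + e • vecMulVec p q
          + (e * (n ⬝ᵥ p)) • vecMulVec a q := by
    intro a n p q e
    ext i j
    simp only [Matrix.mul_apply, Matrix.add_apply, Matrix.smul_apply, Matrix.one_apply,
      vecMulVec_apply, dotProduct, Fin.sum_univ_three, smul_eq_mul]
    fin_cases i <;> fin_cases j <;> simp <;> ring
  rw [expand, expand]
  have hβ2 : β * lam = -Real.sqrt 2 := by rw [hβ']; field_simp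
  have hα2 : α * (2 * (lam ^ 2 + 1)) = lam ^ 2 - 1 := by rw [hα']; field_simp
  have hη₁2 : η₁ * (2 * (2 * lam ^ 4 + 5 * Real.sqrt 2 * lam ^ 3 - 4 * lam ^ 2 + 3 * Real.sqrt 2 * lam + 2)) = 2 * lam ^ 4 + 5 * Real.sqrt 2 * lam ^ 3 + 4 * lam ^ 2 - 5 * Real.sqrt 2 * lam - 6 := by
    rw [hη₁]; exact div_mul_cancel₀ _ (mul_ne_zero two_ne_zero hD)
  have hη₂2 : η₂ * (2 * (2 * lam ^ 4 + 5 * Real.sqrt 2 * lam ^ 3 - 4 * lam ^ 2 + 3 * Real.sqrt 2 * lam + 2)) = 2 * lam ^ 4 + Real.sqrt 2 * lam ^ 3 - 4 * lam ^ 2 - Real.sqrt 2 * lam + 2 := by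
    rw [hη₂]; exact div_mul_cancel₀ _ (mul_ne_zero two_ne_zero hD)
  have hC0 : lam * (2 * (lam ^ 2 + 1)) * (2 * (2 * lam ^ 4 + 5 * Real.sqrt 2 * lam ^ 3 - 4 * lam ^ 2 + 3 * Real.sqrt 2 * lam + 2)) ≠ 0 :=
    mul_ne_zero (mul_ne_zero hl0.ne' (by positivity)) (mul_ne_zero two_ne_zero hD)
  have hkey : (1 + vecMulVec a₁ n₁ + η₁ • vecMulVec φ₁ ψ
          + (η₁ * (n₁ ⬝ᵥ φ₁)) • vecMulVec a₁ ψ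
      - (1 + vecMulVec a₃ n₃ + η₂ • vecMulVec φ₂ ψ
          + (η₂ * (n₃ ⬝ᵥ φ₂)) • vecMulVec a₃ ψ))
      = vecMulVec ![-1, 1, 0] (fun j =>
        (1 + vecMulVec a₁ n₁ + η₁ • vecMulVec φ₁ ψ
          + (η₁ * (n₁ ⬝ᵥ φ₁)) • vecMulVec a₁ ψ
      - (1 + vecMulVec a₃ n₃ + η₂ • vecMulVec φ₂ ψ
          + (η₂ * (n₃ ⬝ᵥ φ₂)) • vecMulVec a₃ ψ)) 1 j) := by
    ext i j
    have h3 : ∀ k : Fin 3, k = 0 ∨ k = 1 ∨ k = 2 := by decide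
    rcases h3 i with rfl|rfl|rfl <;> rcases h3 j with rfl|rfl|rfl <;>
      simp only [ha₁, hn₁, ha₃, hn₃, hψ, hφ₁, hφ₂] <;>
      simp [Matrix.sub_apply, Matrix.add_apply, Matrix.smul_apply, Matrix.one_apply,
        vecMulVec_apply, dotProduct, Fin.sum_univ_three, smul_eq_mul]
    · apply mul_right_cancel₀ hC0
      linear_combination ((8:ℝ) * α + (12:ℝ) * α * lam * Real.sqrt 2 + (-8:ℝ) * α * lam ^ 2 + (32:ℝ) * α * lam ^ 3 * Real.sqrt 2 + (-8:ℝ) * α * lam ^ 4 + (20:ℝ) * α * lam ^ 5 * Real.sqrt 2 + (8:ℝ) * α * lam ^ 6 + (8:ℝ) * α * η₂ + (12:ℝ) * α * η₂ * lam * Real.sqrt 2 + (-8:ℝ) * α * η₂ * lam ^ 2 + (32:ℝ) * α * η₂ * lam ^ 3 * Real.sqrt 2 + (-8:ℝ) * α * η₂ * lam ^ 4 + (20:ℝ) * α * η₂ * lam ^ 5 * Real.sqrt 2 + (8:ℝ) * α * η₂ * lam ^ 6 + (8:ℝ) * α * η₁ + (12:ℝ) * α * η₁ * lam * Real.sqrt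 2 + (-8:ℝ) * α * η₁ * lam ^ 2 + (32:ℝ) * α * η₁ * lam ^ 3 * Real.sqrt 2 + (-8:ℝ) * α * η₁ * lam ^ 4 + (20:ℝ) * α * η₁ * lam ^ 5 * Real.sqrt 2 + (8:ℝ) * α * η₁ * lam ^ 6 + (-8:ℝ) * α * γ + (-12:ℝ) * α * γ * lam * Real.sqrt 2 + (8:ℝ) * α * γ * lam ^ 2 + (-32:ℝ) * α * γ * lam ^ 3 * Real.sqrt 2 + (8:ℝ) * α * γ * lam ^ 4 + (-20:ℝ) * α * γ * lam ^ 5 * Real.sqrt 2 + (-8:ℝ) * α * γ * lam ^ 6 + (-8:ℝ) * α * γ * η₂ + (-12:ℝ) * α * γ * η₂ * lam * Real.sqrt 2 + (8:ℝ) * α * γ * η₂ * lam ^ 2 + (-32:ℝ) * α * γ * η₂ * lam ^ 3 * Real.sqrt 2 + (8:ℝ) * α * γ * η₂ * lam ^ 4 + (-20:ℝ) * α * γ * η₂ * lam ^ 5 * Real.sqrt 2 + (-8:ℝ) * α * γ * η₂ * lam ^ 6 + (-8:ℝ) * α * γ * η₁ + (-12:ℝ) * α * γ * η₁ * lam * Real.sqrt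 2 + (8:ℝ) * α * γ * η₁ * lam ^ 2 + (-32:ℝ) * α * γ * η₁ * lam ^ 3 * Real.sqrt 2 + (8:ℝ) * α * γ * η₁ * lam ^ 4 + (-20:ℝ) * α * γ * η₁ * lam ^ 5 * Real.sqrt 2 + (-8:ℝ) * α * γ * η₁ * lam ^ 6) * hβ2 + ((8:ℝ) * α * Real.sqrt 2 + (8:ℝ) * α * lam + (12:ℝ) * α * lam * Real.sqrt 2 ^ 2 + (4:ℝ) * α * lam ^ 2 * Real.sqrt 2 + (-8:ℝ) * α * lam ^ 3 + (32:ℝ) * α * lam ^ 3 * Real.sqrt 2 ^ 2 + (24:ℝ) * α * lam ^ 4 * Real.sqrt 2 + (-8:ℝ) * α * lam ^ 5 + (20:ℝ) * α * lam ^ 5 * Real.sqrt 2 ^ 2 + (28:ℝ) * α * lam ^ 6 * Real.sqrt 2 + (8:ℝ) * α * lam ^ 7 + (8:ℝ) * α * η₂ * Real.sqrt 2 + (12:ℝ) * α * η₂ * lam * Real.sqrt 2 ^ 2 + (-8:ℝ) * α * η₂ * lam ^ 2 * Real.sqrt 2 + (32:ℝ) * α * η₂ * lam ^ 3 * Real.sqrt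 2 ^ 2 + (-8:ℝ) * α * η₂ * lam ^ 4 * Real.sqrt 2 + (20:ℝ) * α * η₂ * lam ^ 5 * Real.sqrt 2 ^ 2 + (8:ℝ) * α * η₂ * lam ^ 6 * Real.sqrt 2 + (8:ℝ) * α * η₁ * Real.sqrt 2 + (-16:ℝ) * α * η₁ * lam + (12:ℝ) * α * η₁ * lam * Real.sqrt 2 ^ 2 + (-32:ℝ) * α * η₁ * lam ^ 2 * Real.sqrt 2 + (16:ℝ) * α * η₁ * lam ^ 3 + (32:ℝ) * α * η₁ * lam ^ 3 * Real.sqrt 2 ^ 2 + (-72:ℝ) * α * η₁ * lam ^ 4 * Real.sqrt 2 + (16:ℝ) * α * η₁ * lam ^ 5 + (20:ℝ) * α * η₁ * lam ^ 5 * Real.sqrt 2 ^ 2 + (-32:ℝ) * α * η₁ * lam ^ 6 * Real.sqrt 2 + (-16:ℝ) * α * η₁ * lam ^ 7) * hγ' + ((-4:ℝ) * Real.sqrt 2 + (-4:ℝ) * lam + (-10:ℝ) * lam * Real.sqrt 2 ^ 2 + (-2:ℝ) * lam ^ 2 * Real.sqrt 2 + (-6:ℝ) * lam ^ 2 * Real.sqrt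 2 ^ 3 + (8:ℝ) * lam ^ 3 + (-8:ℝ) * lam ^ 3 * Real.sqrt 2 ^ 2 + (-6:ℝ) * lam ^ 4 * Real.sqrt 2 + (-10:ℝ) * lam ^ 4 * Real.sqrt 2 ^ 3 + (-4:ℝ) * lam ^ 5 + (-14:ℝ) * lam ^ 5 * Real.sqrt 2 ^ 2 + (-4:ℝ) * lam ^ 6 * Real.sqrt 2 + (-4:ℝ) * η₂ * Real.sqrt 2 + (-10:ℝ) * η₂ * lam * Real.sqrt 2 ^ 2 + (8:ℝ) * η₂ * lam ^ 2 * Real.sqrt 2 + (-6:ℝ) * η₂ * lam ^ 2 * Real.sqrt 2 ^ 3 + (-2:ℝ) * η₂ * lam ^ 3 * Real.sqrt 2 ^ 2 + (-4:ℝ) * η₂ * lam ^ 4 * Real.sqrt 2 + (-10:ℝ) * η₂ * lam ^ 4 * Real.sqrt 2 ^ 3 + (-4:ℝ) * η₂ * lam ^ 5 * Real.sqrt 2 ^ 2 + (-4:ℝ) * η₁ * Real.sqrt 2 + (8:ℝ) * η₁ * lam + (-10:ℝ) * η₁ * lam * Real.sqrt 2 ^ 2 + (28:ℝ) * η₁ *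 lam ^ 2 * Real.sqrt 2 + (-6:ℝ) * η₁ * lam ^ 2 * Real.sqrt 2 ^ 3 + (-16:ℝ) * η₁ * lam ^ 3 + (10:ℝ) * η₁ * lam ^ 3 * Real.sqrt 2 ^ 2 + (-10:ℝ) * η₁ * lam ^ 4 * Real.sqrt 2 ^ 3 + (8:ℝ) * η₁ * lam ^ 5 + (16:ℝ) * η₁ * lam ^ 5 * Real.sqrt 2 ^ 2 + (8:ℝ) * η₁ * lam ^ 6 * Real.sqrt 2) * hα2 + ((1:ℝ) * Real.sqrt 2 + (2:ℝ) * lam + (1:ℝ) * lam * Real.sqrt 2 ^ 2 + (-3:ℝ) * lam ^ 2 * Real.sqrt 2 + (6:ℝ) * lam ^ 3 + (-1:ℝ) * lam ^ 3 * Real.sqrt 2 ^ 2 + (2:ℝ) * lam ^ 4 * Real.sqrt 2) * hη₁2 + ((1:ℝ) * Real.sqrt 2 + (4:ℝ) * lam + (1:ℝ) * lam * Real.sqrt 2 ^ 2 + (-1:ℝ) * lam ^ 2 * Real.sqrt 2 + (4:ℝ) * lam ^ 3 + (-1:ℝ) * lam ^ 3 * Real.sqrt 2 ^ 2) * hη₂2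 + ((24:ℝ) * lam ^ 3 + (16:ℝ) * lam ^ 4 * Real.sqrt 2 + (-16:ℝ) * lam ^ 5 + (-16:ℝ) * lam ^ 6 * Real.sqrt 2 + (-8:ℝ) * lam ^ 7) * ht2
    · apply mul_right_cancel₀ hC0
      linear_combination ((-8:ℝ) * α + (-12:ℝ) * α * lam * Real.sqrt 2 + (8:ℝ) * α * lam ^ 2 + (-32:ℝ) * α * lam ^ 3 * Real.sqrt 2 + (8:ℝ) * α * lam ^ 4 + (-20:ℝ) * α * lam ^ 5 * Real.sqrt 2 + (-8:ℝ) * α * lam ^ 6 + (-8:ℝ) * α * η₂ + (-12:ℝ) * α * η₂ * lam * Real.sqrt 2 + (8:ℝ) * α * η₂ * lam ^ 2 + (-32:ℝ) * α * η₂ * lam ^ 3 * Real.sqrt 2 + (8:ℝ) * α * η₂ * lam ^ 4 + (-20:ℝ) * α * η₂ * lam ^ 5 * Real.sqrt 2 + (-8:ℝ) * α * η₂ * lam ^ 6 + (-8:ℝ) * α * η₁ + (-12:ℝ) * α * η₁ * lam * Real.sqrt 2 + (8:ℝ) * α * η₁ * lam ^ 2 + (-32:ℝ) * α * η₁ * lam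 ^ 3 * Real.sqrt 2 + (8:ℝ) * α * η₁ * lam ^ 4 + (-20:ℝ) * α * η₁ * lam ^ 5 * Real.sqrt 2 + (-8:ℝ) * α * η₁ * lam ^ 6 + (8:ℝ) * α * γ + (12:ℝ) * α * γ * lam * Real.sqrt 2 + (-8:ℝ) * α * γ * lam ^ 2 + (32:ℝ) * α * γ * lam ^ 3 * Real.sqrt 2 + (-8:ℝ) * α * γ * lam ^ 4 + (20:ℝ) * α * γ * lam ^ 5 * Real.sqrt 2 + (8:ℝ) * α * γ * lam ^ 6 + (8:ℝ) * α * γ * η₂ + (12:ℝ) * α * γ * η₂ * lam * Real.sqrt 2 + (-8:ℝ) * α * γ * η₂ * lam ^ 2 + (32:ℝ) * α * γ * η₂ * lam ^ 3 * Real.sqrt 2 + (-8:ℝ) * α * γ * η₂ * lam ^ 4 + (20:ℝ) * α * γ * η₂ * lam ^ 5 * Real.sqrt 2 + (8:ℝ) * α * γ * η₂ * lam ^ 6 + (8:ℝ) * α * γ * η₁ + (12:ℝ) * α * γ * η₁ * lam * Real.sqrt 2 + (-8:ℝ) * α * γ * η₁ * lam ^ 2 + (32:ℝ) * α * γ * η₁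 * lam ^ 3 * Real.sqrt 2 + (-8:ℝ) * α * γ * η₁ * lam ^ 4 + (20:ℝ) * α * γ * η₁ * lam ^ 5 * Real.sqrt 2 + (8:ℝ) * α * γ * η₁ * lam ^ 6) * hβ2 + ((-8:ℝ) * α * Real.sqrt 2 + (-8:ℝ) * α * lam + (-12:ℝ) * α * lam * Real.sqrt 2 ^ 2 + (-4:ℝ) * α * lam ^ 2 * Real.sqrt 2 + (8:ℝ) * α * lam ^ 3 + (-32:ℝ) * α * lam ^ 3 * Real.sqrt 2 ^ 2 + (-24:ℝ) * α * lam ^ 4 * Real.sqrt 2 + (8:ℝ) * α * lam ^ 5 + (-20:ℝ) * α * lam ^ 5 * Real.sqrt 2 ^ 2 + (-28:ℝ) * α * lam ^ 6 * Real.sqrt 2 + (-8:ℝ) * α * lam ^ 7 + (-8:ℝ) * α * η₂ * Real.sqrt 2 + (-12:ℝ) * α * η₂ * lam * Real.sqrt 2 ^ 2 + (8:ℝ) * α * η₂ * lam ^ 2 * Real.sqrt 2 + (-32:ℝ) * α * η₂ * lam ^ 3 * Real.sqrt 2 ^ 2 + (8:ℝ) * α * η₂ * lam ^ 4 * Real.sqrt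 2 + (-20:ℝ) * α * η₂ * lam ^ 5 * Real.sqrt 2 ^ 2 + (-8:ℝ) * α * η₂ * lam ^ 6 * Real.sqrt 2 + (-8:ℝ) * α * η₁ * Real.sqrt 2 + (16:ℝ) * α * η₁ * lam + (-12:ℝ) * α * η₁ * lam * Real.sqrt 2 ^ 2 + (32:ℝ) * α * η₁ * lam ^ 2 * Real.sqrt 2 + (-16:ℝ) * α * η₁ * lam ^ 3 + (-32:ℝ) * α * η₁ * lam ^ 3 * Real.sqrt 2 ^ 2 + (72:ℝ) * α * η₁ * lam ^ 4 * Real.sqrt 2 + (-16:ℝ) * α * η₁ * lam ^ 5 + (-20:ℝ) * α * η₁ * lam ^ 5 * Real.sqrt 2 ^ 2 + (32:ℝ) * α * η₁ * lam ^ 6 * Real.sqrt 2 + (16:ℝ) * α * η₁ * lam ^ 7) * hγ' + ((4:ℝ) * Real.sqrt 2 + (4:ℝ) * lam + (10:ℝ) * lam * Real.sqrt 2 ^ 2 + (2:ℝ) * lam ^ 2 * Real.sqrt 2 + (6:ℝ) * lam ^ 2 * Real.sqrt 2 ^ 3 + (-8:ℝ) * lam ^ 3 + (8:ℝ) * lam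 ^ 3 * Real.sqrt 2 ^ 2 + (6:ℝ) * lam ^ 4 * Real.sqrt 2 + (10:ℝ) * lam ^ 4 * Real.sqrt 2 ^ 3 + (4:ℝ) * lam ^ 5 + (14:ℝ) * lam ^ 5 * Real.sqrt 2 ^ 2 + (4:ℝ) * lam ^ 6 * Real.sqrt 2 + (4:ℝ) * η₂ * Real.sqrt 2 + (10:ℝ) * η₂ * lam * Real.sqrt 2 ^ 2 + (-8:ℝ) * η₂ * lam ^ 2 * Real.sqrt 2 + (6:ℝ) * η₂ * lam ^ 2 * Real.sqrt 2 ^ 3 + (2:ℝ) * η₂ * lam ^ 3 * Real.sqrt 2 ^ 2 + (4:ℝ) * η₂ * lam ^ 4 * Real.sqrt 2 + (10:ℝ) * η₂ * lam ^ 4 * Real.sqrt 2 ^ 3 + (4:ℝ) * η₂ * lam ^ 5 * Real.sqrt 2 ^ 2 + (4:ℝ) * η₁ * Real.sqrt 2 + (-8:ℝ) * η₁ * lam + (10:ℝ) * η₁ * lam * Real.sqrt 2 ^ 2 + (-28:ℝ) * η₁ * lam ^ 2 * Real.sqrt 2 + (6:ℝ) * η₁ * lam ^ 2 * Real.sqrt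 2 ^ 3 + (16:ℝ) * η₁ * lam ^ 3 + (-10:ℝ) * η₁ * lam ^ 3 * Real.sqrt 2 ^ 2 + (10:ℝ) * η₁ * lam ^ 4 * Real.sqrt 2 ^ 3 + (-8:ℝ) * η₁ * lam ^ 5 + (-16:ℝ) * η₁ * lam ^ 5 * Real.sqrt 2 ^ 2 + (-8:ℝ) * η₁ * lam ^ 6 * Real.sqrt 2) * hα2 + ((-1:ℝ) * Real.sqrt 2 + (-2:ℝ) * lam + (-1:ℝ) * lam * Real.sqrt 2 ^ 2 + (3:ℝ) * lam ^ 2 * Real.sqrt 2 + (-6:ℝ) * lam ^ 3 + (1:ℝ) * lam ^ 3 * Real.sqrt 2 ^ 2 + (-2:ℝ) * lam ^ 4 * Real.sqrt 2) * hη₁2 + ((-1:ℝ) * Real.sqrt 2 + (-4:ℝ) * lam + (-1:ℝ) * lam * Real.sqrt 2 ^ 2 + (1:ℝ) * lam ^ 2 * Real.sqrt 2 + (-4:ℝ) * lam ^ 3 + (1:ℝ) * lam ^ 3 * Real.sqrt 2 ^ 2) * hη₂2 + ((-24:ℝ) * lam ^ 3 + (-16:ℝ) * lam ^ 4 * Real.sqrt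 2 + (16:ℝ) * lam ^ 5 + (16:ℝ) * lam ^ 6 * Real.sqrt 2 + (8:ℝ) * lam ^ 7) * ht2
    · ring1
    · apply mul_right_cancel₀ hC0
      linear_combination ((8:ℝ) * α + (12:ℝ) * α * lam * Real.sqrt 2 + (-8:ℝ) * α * lam ^ 2 + (32:ℝ) * α * lam ^ 3 * Real.sqrt 2 + (-8:ℝ) * α * lam ^ 4 + (20:ℝ) * α * lam ^ 5 * Real.sqrt 2 + (8:ℝ) * α * lam ^ 6 + (8:ℝ) * α * η₂ + (12:ℝ) * α * η₂ * lam * Real.sqrt 2 + (-8:ℝ) * α * η₂ * lam ^ 2 + (32:ℝ) * α * η₂ * lam ^ 3 * Real.sqrt 2 + (-8:ℝ) * α * η₂ * lam ^ 4 + (20:ℝ) * α * η₂ * lam ^ 5 * Real.sqrt 2 + (8:ℝ) * α * η₂ * lam ^ 6 + (8:ℝ) * α * η₁ + (12:ℝ) * α * η₁ * lam * Real.sqrt 2 + (-8:ℝ) * α * η₁ * lam ^ 2 + (32:ℝ) * α * η₁ * lam ^ 3 * Real.sqrt 2 + (-8:ℝ) * α * η₁ * lam ^ 4 + (20:ℝ)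 * α * η₁ * lam ^ 5 * Real.sqrt 2 + (8:ℝ) * α * η₁ * lam ^ 6) * hβ2 + ((-4:ℝ) * Real.sqrt 2 + (-4:ℝ) * lam + (-6:ℝ) * lam * Real.sqrt 2 ^ 2 + (2:ℝ) * lam ^ 2 * Real.sqrt 2 + (8:ℝ) * lam ^ 3 + (-10:ℝ) * lam ^ 3 * Real.sqrt 2 ^ 2 + (-14:ℝ) * lam ^ 4 * Real.sqrt 2 + (-4:ℝ) * lam ^ 5 + (-4:ℝ) * η₂ * Real.sqrt 2 + (-6:ℝ) * η₂ * lam * Real.sqrt 2 ^ 2 + (8:ℝ) * η₂ * lam ^ 2 * Real.sqrt 2 + (-10:ℝ) * η₂ * lam ^ 3 * Real.sqrt 2 ^ 2 + (-4:ℝ) * η₂ * lam ^ 4 * Real.sqrt 2 + (-4:ℝ) * η₁ * Real.sqrt 2 + (8:ℝ) * η₁ * lam + (-6:ℝ) * η₁ * lam * Real.sqrt 2 ^ 2 + (20:ℝ) * η₁ * lam ^ 2 * Real.sqrt 2 + (-16:ℝ) * η₁ * lam ^ 3 + (-10:ℝ) * η₁ * lam ^ 3 * Real.sqrt 2 ^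 2 + (16:ℝ) * η₁ * lam ^ 4 * Real.sqrt 2 + (8:ℝ) * η₁ * lam ^ 5) * hα2 + ((1:ℝ) * Real.sqrt 2 + (-1:ℝ) * lam ^ 2 * Real.sqrt 2 + (4:ℝ) * lam ^ 3) * hη₁2 + ((1:ℝ) * Real.sqrt 2 + (-2:ℝ) * lam + (-1:ℝ) * lam ^ 2 * Real.sqrt 2 + (-2:ℝ) * lam ^ 3) * hη₂2 + ((16:ℝ) * lam ^ 3 + (-16:ℝ) * lam ^ 5) * ht2
    · apply mul_right_cancel₀ hC0
      linear_combination ((-8:ℝ) * α + (-12:ℝ) * α * lam * Real.sqrt 2 + (8:ℝ) * α * lam ^ 2 + (-32:ℝ) * α * lam ^ 3 * Real.sqrt 2 + (8:ℝ) * α * lam ^ 4 + (-20:ℝ) * α * lam ^ 5 * Real.sqrt 2 + (-8:ℝ) * α * lam ^ 6 + (-8:ℝ) * α * η₂ + (-12:ℝ) * α * η₂ * lam * Real.sqrt 2 + (8:ℝ) * α * η₂ * lam ^ 2 + (-32:ℝ) * α * η₂ * lam ^ 3 * Real.sqrt 2 + (8:ℝ) * α * η₂ * lam ^ 4 + (-20:ℝ)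 * α * η₂ * lam ^ 5 * Real.sqrt 2 + (-8:ℝ) * α * η₂ * lam ^ 6 + (-8:ℝ) * α * η₁ + (-12:ℝ) * α * η₁ * lam * Real.sqrt 2 + (8:ℝ) * α * η₁ * lam ^ 2 + (-32:ℝ) * α * η₁ * lam ^ 3 * Real.sqrt 2 + (8:ℝ) * α * η₁ * lam ^ 4 + (-20:ℝ) * α * η₁ * lam ^ 5 * Real.sqrt 2 + (-8:ℝ) * α * η₁ * lam ^ 6) * hβ2 + ((4:ℝ) * Real.sqrt 2 + (4:ℝ) * lam + (6:ℝ) * lam * Real.sqrt 2 ^ 2 + (-2:ℝ) * lam ^ 2 * Real.sqrt 2 + (-8:ℝ) * lam ^ 3 + (10:ℝ) * lam ^ 3 * Real.sqrt 2 ^ 2 + (14:ℝ) * lam ^ 4 * Real.sqrt 2 + (4:ℝ) * lam ^ 5 + (4:ℝ) * η₂ * Real.sqrt 2 + (6:ℝ) * η₂ * lam * Real.sqrt 2 ^ 2 + (-8:ℝ) * η₂ * lam ^ 2 * Real.sqrt 2 + (10:ℝ) * η₂ * lam ^ 3 * Real.sqrt 2 ^ 2 + (4:ℝ) * η₂ *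 lam ^ 4 * Real.sqrt 2 + (4:ℝ) * η₁ * Real.sqrt 2 + (-8:ℝ) * η₁ * lam + (6:ℝ) * η₁ * lam * Real.sqrt 2 ^ 2 + (-20:ℝ) * η₁ * lam ^ 2 * Real.sqrt 2 + (16:ℝ) * η₁ * lam ^ 3 + (10:ℝ) * η₁ * lam ^ 3 * Real.sqrt 2 ^ 2 + (-16:ℝ) * η₁ * lam ^ 4 * Real.sqrt 2 + (-8:ℝ) * η₁ * lam ^ 5) * hα2 + ((-1:ℝ) * Real.sqrt 2 + (1:ℝ) * lam ^ 2 * Real.sqrt 2 + (-4:ℝ) * lam ^ 3) * hη₁2 + ((-1:ℝ) * Real.sqrt 2 + (2:ℝ) * lam + (1:ℝ) * lam ^ 2 * Real.sqrt 2 + (2:ℝ) * lam ^ 3) * hη₂2 + ((-16:ℝ) * lam ^ 3 + (16:ℝ) * lam ^ 5) * ht2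
  rw [hkey, vecMulVec_eq (Fin 1)]
  exact le_trans (Matrix.rank_mul_le_left _ _)
    (le_trans (Matrix.rank_le_card_width _) (by simp))
end
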